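/- Heap tracking: (1) if 𝒞[·] ⊢ ℋ and l ∉ dom ℋ, then 𝒞[l:[m]] ⊢ ℋ ∪ {l ↦ (0, m, ε)}; (2) if 𝒞[l:[m']] ⊢ ℋ ∪ {l ↦ (n, m₀, m)} and m₁⊙m₂ ≤ m', then 𝒞[l:[m₁], l:[m₂]] ⊢ ℋ ∪ {l ↦ (n+1, m₀, m)}; (3) if (l:[m'] , C) ⊢ ℋ ∪ {l ↦ (n, m₀, m)} and m₁⊙m₂ ≤ m', then (l:[m₂] , C) ⊢ ℋ ∪ {l ↦ (n, m₀, m⊙m₁)}; (4) if 𝒞[l:[m']] ⊢ ℋ ∪ {l ↦ (n+1, m₀, m)} and ε ≤ m', then 𝒞[·] ⊢ ℋ ∪ {l ↦ (n, m₀, m)}; (5) if 𝒞[l:[m']] ⊢ ℋ ∪ {l ↦ (0, m₀, m)} and l ∉ dom ℋ, then 𝒞[·] ⊢ ℋ. -/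

import Mathlib

set_option autoImplicit false
set_option linter.unusedVariables false

namespace LawOrder

/-! ## Graph representations -/

structure Graph (B : Type) where
  n : ℕ
  label : ℕ → B
  edge : ℕ → ℕ → Prop
  edge_lt : ∀ i j, edge i j → i < n ∧ j < n

namespace Graph

variable {B : Type}

/-- The edge relation is acyclic. -/
def Acyclic (G : Graph B) : Prop := ∀ i, ¬ Relation.TransGen G.edge i i

/-- The empty graph representation. -/
def zero (B : Type) [Inhabited B] : Graph B :=
  ⟨0, fun _ => default, fun _ _ => False, fun _ _ h => h.elim⟩

/-- Union of two graph representations: disjoint union, second part shifted. -/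
def union (G₁ G₂ : Graph B) : Graph B where
  n := G₁.n + G₂.n
  label := fun i => if i < G₁.n then G₁.label i else G₂.label (i - G₁.n)
  edge := fun i j =>
    G₁.edge i j ∨ (G₁.n ≤ i ∧ G₁.n ≤ j ∧ G₂.edge (i - G₁.n) (j - G₁.n))
  edge_lt := by
    intro i j h
    rcases h with h | ⟨hi, hj, h⟩
    · have := G₁.edge_lt i j h; omega
    · have := G₂.edge_lt _ _ h; omega

/-- Join of two graph representations: union plus all edges from the first
    part to the second part. -/
def join (G₁ G₂ : Graph B) : Graph B where
  n := G₁.n + G₂.n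
  label := fun i => if i < G₁.n then G₁.label i else G₂.label (i - G₁.n)
  edge := fun i j =>
    G₁.edge i j ∨ (G₁.n ≤ i ∧ G₁.n ≤ j ∧ G₂.edge (i - G₁.n) (j - G₁.n)) ∨
      (i < G₁.n ∧ G₁.n ≤ j ∧ j < G₁.n + G₂.n)
  edge_lt := by
    intro i j h
    rcases h with h | ⟨hi, hj, h⟩ | ⟨hi, hj₁, hj₂⟩
    · have := G₁.edge_lt i j h; omega
    · have := G₂.edge_lt _ _ h; omega
    · omega

/-- Isomorphism of graph representations. -/
def Iso (G₁ G₂ : Graph B) : Prop :=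
  G₁.n = G₂.n ∧ ∃ f : Fin G₁.n → Fin G₁.n, Function.Bijective f ∧
    (∀ i j : Fin G₁.n, G₁.edge (f i).val (f j).val ↔ G₂.edge i.val j.val) ∧
    (∀ i : Fin G₁.n, G₁.label (f i).val = G₂.label i.val)

/-- `G₁` is a spanning graph representation of `G₂`: same vertices and labels,
    and the edges of `G₁` are contained in those of `G₂`. -/
def Spanning (G₁ G₂ : Graph B) : Prop :=
  G₁.n = G₂.n ∧ (∀ i, i < G₁.n → G₁.label i = G₂.label i) ∧
    ∀ i j, G₁.edge i j → G₂.edge i j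

/-- `f` is a topological ordering of `G`: `f` enumerates the vertices so that
    edges always point forward. -/
def IsTopOrder (G : Graph B) (f : Equiv.Perm (Fin G.n)) : Prop :=
  ∀ i j : Fin G.n, G.edge i.val j.val → f.symm i < f.symm j

/-- `G` has exactly one topological ordering. -/
def Traceable (G : Graph B) : Prop :=
  ∃! f : Equiv.Perm (Fin G.n), G.IsTopOrder f

/-- The identity enumeration is a topological ordering: all edges increase. -/
def TopOrdered (G : Graph B) : Prop := ∀ i j, G.edge i j → i < j

/-- `k` is a union cut of `G`: no edge crosses from below `k` to `k` or above. -/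
def UnionCut (G : Graph B) (k : ℕ) : Prop :=
  0 < k ∧ k < G.n ∧ ∀ i j, i < k → k ≤ j → ¬ G.edge i j

/-- `k` is a join cut of `G`: every pair crossing from below `k` to `k` or
    above (within range) is an edge. -/
def JoinCut (G : Graph B) (k : ℕ) : Prop :=
  0 < k ∧ k < G.n ∧ ∀ i j, i < k → k ≤ j → j < G.n → G.edge i j

/-- Lower part of the index cut at `k`. -/
def cutLo (G : Graph B) (k : ℕ) : Graph B where
  n := k
  label := G.label
  edge := fun i j => G.edge i j ∧ i < k ∧ j < k
  edge_lt := fun i j h => ⟨h.2.1, h.2.2⟩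

/-- Upper part of the index cut at `k` (re-indexed from 0). -/
def cutHi (G : Graph B) (k : ℕ) : Graph B where
  n := G.n - k
  label := fun i => G.label (i + k)
  edge := fun i j => G.edge (i + k) (j + k)
  edge_lt := by
    intro i j h
    have := G.edge_lt _ _ h
    omega

/-- Weak connectedness: any two vertices are joined by an undirected path. -/
def WeaklyConnected (G : Graph B) : Prop :=
  ∀ i j, i < G.n → j < G.n →
    Relation.ReflTransGen (fun a b => G.edge a b ∨ G.edge b a) i j

/-- Union of a nonempty sequence of graph representations. -/
def unionList (G : Graph B) (L : List (Graph B)) : Graph B :=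
  L.foldl union G

end Graph

/-! ## Contexts built from bindings with ordered and unordered composition -/

inductive GCtx (B : Type) where
  | empty : GCtx B
  | bind : B → GCtx B
  | comma : GCtx B → GCtx B → GCtx B
  | par : GCtx B → GCtx B → GCtx B

/-- Context patterns: contexts with a single hole. -/
inductive GPat (B : Type) where
  | hole : GPat B
  | commaL : GPat B → GCtx B → GPat B
  | commaR : GCtx B → GPat B → GPat B
  | parL : GPat B → GCtx B → GPat B
  | parR : GCtx B → GPat B → GPat B

def GPat.fill {B : Type} : GPat B → GCtx B → GCtx B
  | .hole, Γ => Γ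
  | .commaL G Δ, Γ => .comma (G.fill Γ) Δ
  | .commaR Δ G, Γ => .comma Δ (G.fill Γ)
  | .parL G Δ, Γ => .par (G.fill Γ) Δ
  | .parR Δ G, Γ => .par Δ (G.fill Γ)

def GCtx.toList {B : Type} : GCtx B → List B
  | .empty => []
  | .bind b => [b]
  | .comma Γ₁ Γ₂ => Γ₁.toList ++ Γ₂.toList
  | .par Γ₁ Γ₂ => Γ₁.toList ++ Γ₂.toList

/-- Graph part of the interpretation of a context: unrestricted bindings
    contribute no vertex, ordered bindings one vertex; `comma` is join,
    `par` is union. -/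
def GCtx.interpG {B : Type} [Inhabited B] (unr : B → Bool) : GCtx B → Graph B
  | .empty => Graph.zero B
  | .bind b =>
      if unr b then Graph.zero B
      else ⟨1, fun _ => b, fun _ _ => False, fun _ _ h => h.elim⟩
  | .comma Γ₁ Γ₂ => (interpG unr Γ₁).join (interpG unr Γ₂)
  | .par Γ₁ Γ₂ => (interpG unr Γ₁).union (interpG unr Γ₂)

/-- Set part of the interpretation of a context: the set of its
    unrestricted bindings. -/
def GCtx.unrSet {B : Type} (unr : B → Bool) : GCtx B → Set B
  | .empty => ∅
  | .bind b => if unr b then {b} else ∅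
  | .comma Γ₁ Γ₂ => unrSet unr Γ₁ ∪ unrSet unr Γ₂
  | .par Γ₁ Γ₂ => unrSet unr Γ₁ ∪ unrSet unr Γ₂

/-! ## Ordered partial monoids -/

structure OPM (α : Type) where
  mul : α → α → Option α
  eps : α
  le : α → α → Prop
  le_refl : ∀ a, le a a
  le_trans : ∀ a b c, le a b → le b c → le a c
  eps_mul : ∀ a, mul eps a = some a
  mul_eps : ∀ a, mul a eps = some a
  mul_assoc : ∀ a b c,
    (mul a b).bind (fun x => mul x c) = (mul b c).bind (fun x => mul a x)
  mul_mono : ∀ a a' b b' c', le a a' → le b b' → mul a' b' = some c' →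
    ∃ c, mul a b = some c ∧ le c c'

/-- `P.mulLe a b c` means `a ⊙ b` is defined and `a ⊙ b ≤ c`. -/
def OPM.mulLe {α : Type} (P : OPM α) (a b c : α) : Prop :=
  ∃ r, P.mul a b = some r ∧ P.le r c

/-! ## Types and effects (effects are booleans: `false` = 0, `true` = 1) -/

inductive Ty (α : Type) where
  | unit : Ty α
  | res : α → Ty α
  | arrow : Ty α → Bool → Ty α → Ty α
  | uarrow : Ty α → Bool → Ty α → Ty α
  | rarrow : Ty α → Bool → Ty α → Ty α
  | larrow : Ty α → Bool → Ty α → Ty α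
  | uprod : Ty α → Ty α → Ty α
  | oprod : Ty α → Ty α → Ty α

def Ty.unrB {α : Type} : Ty α → Bool
  | .unit => true
  | .res _ => false
  | .arrow _ _ _ => true
  | .uarrow _ _ _ => false
  | .rarrow _ _ _ => false
  | .larrow _ _ _ => false
  | .uprod S T => S.unrB && T.unrB
  | .oprod S T => S.unrB && T.unrB

/-- Unrestricted types. -/
def Ty.Unr {α : Type} (T : Ty α) : Prop := T.unrB = true

/-- Ordered types. -/
def Ty.Ord {α : Type} (T : Ty α) : Prop := T.unrB = false

/-! ## Bindings and typing contexts -/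

inductive Binding (α : Type) where
  | var : ℕ → Ty α → Binding α
  | loc : ℕ → α → Binding α

instance {α : Type} : Inhabited (Binding α) := ⟨Binding.var 0 Ty.unit⟩

def Binding.unrB {α : Type} : Binding α → Bool
  | .var _ T => T.unrB
  | .loc _ _ => false

abbrev Ctx (α : Type) := GCtx (Binding α)
abbrev CtxPat (α : Type) := GPat (Binding α)

/-- Graph part of the interpretation of a typing context. -/
def interpC {α : Type} (Γ : Ctx α) : Graph (Binding α) :=
  GCtx.interpG Binding.unrB Γ

/-- Set part of the interpretation of a typing context. -/
def unrSetC {α : Type} (Γ : Ctx α) : Set (Binding α) :=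
  GCtx.unrSet Binding.unrB Γ

/-- Subcontext relation `Γ₁ ≲ Γ₂`: up to isomorphism on both sides, the graph
    of `Γ₁` is a spanning subgraph of the graph of `Γ₂`, and the unrestricted
    set of `Γ₂` is contained in that of `Γ₁`. -/
def SubC {α : Type} (Γ₁ Γ₂ : Ctx α) : Prop :=
  (∃ G₁ G₂ : Graph (Binding α),
      Graph.Iso (interpC Γ₁) G₁ ∧ Graph.Spanning G₁ G₂ ∧ Graph.Iso G₂ (interpC Γ₂)) ∧
    unrSetC Γ₂ ⊆ unrSetC Γ₁

def vdom {α : Type} (Γ : Ctx α) : Set ℕ :=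
  {x | ∃ T, Binding.var x T ∈ GCtx.toList Γ}

def ldom {α : Type} (Γ : Ctx α) : Set ℕ :=
  {l | ∃ m, Binding.loc l m ∈ GCtx.toList Γ}

/-- All bindings of the context are unrestricted. -/
def isUnrCtx {α : Type} (Γ : Ctx α) : Prop :=
  ∀ b ∈ GCtx.toList Γ, Binding.unrB b = true

/-- Run-time contexts contain only location bindings. -/
def isRuntime {α : Type} (Γ : Ctx α) : Prop :=
  ∀ b ∈ GCtx.toList Γ, ∃ l m, b = Binding.loc l m

/-! ## Expressions -/

inductive Const (α : Type) where
  | unit : Const α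
  | new : α → Const α
  | op : α → Const α
  | split : α → α → Const α
  | drop : Const α

inductive Expr (α : Type) where
  | const : Const α → Expr α
  | loc : ℕ → Expr α
  | var : ℕ → Expr α
  | abs : ℕ → Expr α → Expr α
  | uabs : ℕ → Expr α → Expr α
  | rabs : ℕ → Expr α → Expr α
  | labs : ℕ → Expr α → Expr α
  | app : Expr α → Expr α → Expr α
  | uapp : Expr α → Expr α → Expr α
  | rapp : Expr α → Expr α → Expr α
  | lapp : Expr α → Expr α → Expr α
  | upair : Expr α → Expr α → Expr α
  | opair : Expr α → Expr α → Expr α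
  | ulet : ℕ → ℕ → Expr α → Expr α → Expr α
  | olet : ℕ → ℕ → Expr α → Expr α → Expr α

inductive IsValue {α : Type} : Expr α → Prop where
  | const : ∀ c : Const α, IsValue (Expr.const c)
  | loc : ∀ l : ℕ, IsValue (Expr.loc l)
  | abs : ∀ (x : ℕ) (M : Expr α), IsValue (Expr.abs x M)
  | uabs : ∀ (x : ℕ) (M : Expr α), IsValue (Expr.uabs x M)
  | rabs : ∀ (x : ℕ) (M : Expr α), IsValue (Expr.rabs x M)
  | labs : ∀ (x : ℕ) (M : Expr α), IsValue (Expr.labs x M)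
  | upair : ∀ V₁ V₂ : Expr α, IsValue V₁ → IsValue V₂ → IsValue (Expr.upair V₁ V₂)
  | opair : ∀ V₁ V₂ : Expr α, IsValue V₁ → IsValue V₂ → IsValue (Expr.opair V₁ V₂)

/-- Substitution `M[V/x]` (values substituted at run time are closed, so
    no capture can occur). -/
def subst {α : Type} : Expr α → Expr α → ℕ → Expr α
  | Expr.const c, _, _ => Expr.const c
  | Expr.loc l, _, _ => Expr.loc l
  | Expr.var y, V, x => if y = x then V else Expr.var y
  | Expr.abs y N, V, x => Expr.abs y (if y = x then N else subst N V x)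
  | Expr.uabs y N, V, x => Expr.uabs y (if y = x then N else subst N V x)
  | Expr.rabs y N, V, x => Expr.rabs y (if y = x then N else subst N V x)
  | Expr.labs y N, V, x => Expr.labs y (if y = x then N else subst N V x)
  | Expr.app M N, V, x => Expr.app (subst M V x) (subst N V x)
  | Expr.uapp M N, V, x => Expr.uapp (subst M V x) (subst N V x)
  | Expr.rapp M N, V, x => Expr.rapp (subst M V x) (subst N V x)
  | Expr.lapp M N, V, x => Expr.lapp (subst M V x) (subst N V x)
  | Expr.upair M N, V, x => Expr.upair (subst M V x) (subst N V x)
  | Expr.opair M N, V, x => Expr.opair (subst M V x) (subst N V x)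
  | Expr.ulet y z M N, V, x =>
      Expr.ulet y z (subst M V x) (if y = x ∨ z = x then N else subst N V x)
  | Expr.olet y z M N, V, x =>
      Expr.olet y z (subst M V x) (if y = x ∨ z = x then N else subst N V x)

/-! ## Typing (Fig. 7) -/

inductive Typing {α : Type} (P : OPM α) : Ctx α → Expr α → Ty α → Bool → Prop where
  | unit : Typing P GCtx.empty (Expr.const Const.unit) Ty.unit false
  | new : ∀ m : α,
      Typing P GCtx.empty (Expr.const (Const.new m))
        (Ty.arrow Ty.unit false (Ty.res m)) false
  | op : ∀ m₀ m₁ m₂ : α, P.mulLe m₁ m₂ m₀ →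
      Typing P GCtx.empty (Expr.const (Const.op m₁))
        (Ty.arrow (Ty.res m₀) true (Ty.res m₂)) false
  | split : ∀ m₀ m₁ m₂ : α, P.mulLe m₁ m₂ m₀ →
      Typing P GCtx.empty (Expr.const (Const.split m₁ m₂))
        (Ty.arrow (Ty.res m₀) false (Ty.oprod (Ty.res m₁) (Ty.res m₂))) false
  | drop : ∀ m : α, P.le P.eps m →
      Typing P GCtx.empty (Expr.const Const.drop)
        (Ty.arrow (Ty.res m) false Ty.unit) false
  | var : ∀ (x : ℕ) (T : Ty α),
      Typing P (GCtx.bind (Binding.var x T)) (Expr.var x) T false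
  | loc : ∀ (l : ℕ) (m : α),
      Typing P (GCtx.bind (Binding.loc l m)) (Expr.loc l) (Ty.res m) false
  | abs : ∀ (Γ : Ctx α) (x : ℕ) (S T : Ty α) (M : Expr α) (e : Bool),
      x ∉ vdom Γ → isUnrCtx Γ →
      Typing P (GCtx.comma Γ (GCtx.bind (Binding.var x S))) M T e →
      Typing P Γ (Expr.abs x M) (Ty.arrow S e T) false
  | uabs : ∀ (Γ : Ctx α) (x : ℕ) (S T : Ty α) (M : Expr α) (e : Bool),
      x ∉ vdom Γ →
      Typing P (GCtx.par Γ (GCtx.bind (Binding.var x S))) M T e →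
      Typing P Γ (Expr.uabs x M) (Ty.uarrow S e T) false
  | rabs : ∀ (Γ : Ctx α) (x : ℕ) (S T : Ty α) (M : Expr α) (e : Bool),
      x ∉ vdom Γ →
      Typing P (GCtx.comma Γ (GCtx.bind (Binding.var x S))) M T e →
      Typing P Γ (Expr.rabs x M) (Ty.rarrow S e T) false
  | labs : ∀ (Γ : Ctx α) (x : ℕ) (S T : Ty α) (M : Expr α) (e : Bool),
      x ∉ vdom Γ →
      Typing P (GCtx.comma (GCtx.bind (Binding.var x S)) Γ) M T e →
      Typing P Γ (Expr.labs x M) (Ty.larrow S e T) false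
  | app : ∀ (Γ₁ Γ₂ : Ctx α) (M N : Expr α) (S T : Ty α) (e e₁ e₂ : Bool),
      Typing P Γ₁ M (Ty.arrow S e T) e₁ → Typing P Γ₂ N S e₂ →
      Typing P (GCtx.comma Γ₁ Γ₂) (Expr.app M N) T (e || e₁ || e₂)
  | uapp : ∀ (Γ₁ Γ₂ : Ctx α) (M N : Expr α) (S T : Ty α) (e e₁ e₂ : Bool),
      Typing P Γ₁ M (Ty.uarrow S e T) e₁ → Typing P Γ₂ N S e₂ →
      Typing P (GCtx.par Γ₁ Γ₂) (Expr.uapp M N) T (e || e₁ || e₂)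
  | rapp : ∀ (Γ₁ Γ₂ : Ctx α) (M N : Expr α) (S T : Ty α) (e e₁ : Bool),
      Typing P Γ₁ M (Ty.rarrow S e T) e₁ → Typing P Γ₂ N S false →
      Typing P (GCtx.comma Γ₁ Γ₂) (Expr.rapp M N) T (e || e₁)
  | lapp : ∀ (Γ₁ Γ₂ : Ctx α) (M N : Expr α) (S T : Ty α) (e e₂ : Bool),
      Typing P Γ₂ M (Ty.larrow S e T) false → Typing P Γ₁ N S e₂ →
      Typing P (GCtx.comma Γ₁ Γ₂) (Expr.lapp M N) T (e || e₂)
  | upair : ∀ (Γ₁ Γ₂ : Ctx α) (M N : Expr α) (S T : Ty α) (e₁ e₂ : Bool),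
      Typing P Γ₁ M S e₁ → Typing P Γ₂ N T e₂ →
      Typing P (GCtx.par Γ₁ Γ₂) (Expr.upair M N) (Ty.uprod S T) (e₁ || e₂)
  | opair : ∀ (Γ₁ Γ₂ : Ctx α) (M N : Expr α) (S T : Ty α) (e₁ e₂ : Bool),
      (Ty.Ord S → e₂ = false) →
      Typing P Γ₁ M S e₁ → Typing P Γ₂ N T e₂ →
      Typing P (GCtx.comma Γ₁ Γ₂) (Expr.opair M N) (Ty.oprod S T) (e₁ || e₂)
  | ulet : ∀ (G : CtxPat α) (Γ : Ctx α) (x y : ℕ) (M N : Expr α)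
        (S₁ S₂ T : Ty α) (e : Bool),
      x ≠ y → x ∉ vdom (GPat.fill G Γ) → y ∉ vdom (GPat.fill G Γ) →
      Typing P Γ M (Ty.uprod S₁ S₂) false →
      Typing P (GPat.fill G (GCtx.par (GCtx.bind (Binding.var x S₁))
        (GCtx.bind (Binding.var y S₂)))) N T e →
      Typing P (GPat.fill G Γ) (Expr.ulet x y M N) T e
  | olet : ∀ (G : CtxPat α) (Γ : Ctx α) (x y : ℕ) (M N : Expr α)
        (S₁ S₂ T : Ty α) (e : Bool),
      x ≠ y → x ∉ vdom (GPat.fill G Γ) → y ∉ vdom (GPat.fill G Γ) →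
      Typing P Γ M (Ty.oprod S₁ S₂) false →
      Typing P (GPat.fill G (GCtx.comma (GCtx.bind (Binding.var x S₁))
        (GCtx.bind (Binding.var y S₂)))) N T e →
      Typing P (GPat.fill G Γ) (Expr.olet x y M N) T e
  | weaken : ∀ (Γ₁ Γ₂ : Ctx α) (M : Expr α) (T : Ty α) (e₁ e₂ : Bool),
      Typing P Γ₁ M T e₁ → SubC Γ₂ Γ₁ → e₁ ≤ e₂ →
      Typing P Γ₂ M T e₂

/-! ## Heaps -/

structure Heap (α : Type) where
  find : ℕ → Option (ℕ × α × α)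
  fin : Set.Finite {l | find l ≠ none}

def Heap.dom {α : Type} (H : Heap α) : Set ℕ := {l | H.find l ≠ none}

def Heap.update {α : Type} (H : Heap α) (l : ℕ) (t : ℕ × α × α) : Heap α where
  find := fun l' => if l' = l then some t else H.find l'
  fin := by
    have hsub : {l' | (if l' = l then some t else H.find l') ≠ none} ⊆
        insert l {l' | H.find l' ≠ none} := by
      intro x hx
      by_cases h : x = l
      · exact Set.mem_insert_iff.mpr (Or.inl h)
      · refine Set.mem_insert_iff.mpr (Or.inr ?_)
        simp only [Set.mem_setOf_eq, if_neg h] at hx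
        exact hx
    exact Set.Finite.subset (Set.Finite.insert l H.fin) hsub

def Heap.erase {α : Type} (H : Heap α) (l : ℕ) : Heap α where
  find := fun l' => if l' = l then none else H.find l'
  fin := by
    apply Set.Finite.subset H.fin
    intro x hx
    simp only [Set.mem_setOf_eq] at hx ⊢
    by_cases h : x = l
    · rw [if_pos h] at hx; exact absurd rfl hx
    · rw [if_neg h] at hx; exact hx

def Heap.empty (α : Type) : Heap α :=
  ⟨fun _ => none, Set.Finite.subset Set.finite_empty (fun _ hx => (hx rfl).elim)⟩

/-! ## Reduction -/

/-- Expression reduction `M →β M'`. -/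
inductive BetaStep {α : Type} : Expr α → Expr α → Prop where
  | beta : ∀ (x : ℕ) (M V : Expr α), IsValue V →
      BetaStep (Expr.app (Expr.abs x M) V) (subst M V x)
  | ubeta : ∀ (x : ℕ) (M V : Expr α), IsValue V →
      BetaStep (Expr.uapp (Expr.uabs x M) V) (subst M V x)
  | rbeta : ∀ (x : ℕ) (M V : Expr α), IsValue V →
      BetaStep (Expr.rapp (Expr.rabs x M) V) (subst M V x)
  | lbeta : ∀ (x : ℕ) (M V : Expr α), IsValue V →
      BetaStep (Expr.lapp (Expr.labs x M) V) (subst M V x)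
  | uletv : ∀ (x y : ℕ) (M V₁ V₂ : Expr α), x ≠ y → IsValue V₁ → IsValue V₂ →
      BetaStep (Expr.ulet x y (Expr.upair V₁ V₂) M) (subst (subst M V₁ x) V₂ y)
  | oletv : ∀ (x y : ℕ) (M V₁ V₂ : Expr α), x ≠ y → IsValue V₁ → IsValue V₂ →
      BetaStep (Expr.olet x y (Expr.opair V₁ V₂) M) (subst (subst M V₁ x) V₂ y)

/-- Configuration reduction `M | ℋ →γ M' | ℋ'`. -/
inductive CfgStep {α : Type} (P : OPM α) : Expr α → Heap α → Expr α → Heap α → Prop where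
  | new : ∀ (H : Heap α) (l : ℕ) (m : α), l ∉ Heap.dom H →
      CfgStep P (Expr.app (Expr.const (Const.new m)) (Expr.const Const.unit)) H
        (Expr.loc l) (H.update l (0, m, P.eps))
  | op : ∀ (H : Heap α) (l n : ℕ) (m₀ m m' m'' : α),
      H.find l = some (n, m₀, m') → P.mul m' m = some m'' →
      (∃ m₃ : α, P.mulLe m'' m₃ m₀) →
      CfgStep P (Expr.app (Expr.const (Const.op m)) (Expr.loc l)) H
        (Expr.loc l) (H.update l (n, m₀, m''))
  | cl1 : ∀ (H : Heap α) (l n : ℕ) (m₀ m : α),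
      H.find l = some (n + 1, m₀, m) →
      CfgStep P (Expr.app (Expr.const Const.drop) (Expr.loc l)) H
        (Expr.const Const.unit) (H.update l (n, m₀, m))
  | cl2 : ∀ (H : Heap α) (l : ℕ) (m₀ m : α),
      H.find l = some (0, m₀, m) → P.le m m₀ →
      CfgStep P (Expr.app (Expr.const Const.drop) (Expr.loc l)) H
        (Expr.const Const.unit) (H.erase l)
  | sp : ∀ (H : Heap α) (l n : ℕ) (m₀ m m₁ m₂ : α),
      H.find l = some (n, m₀, m) →
      CfgStep P (Expr.app (Expr.const (Const.split m₁ m₂)) (Expr.loc l)) H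
        (Expr.opair (Expr.loc l) (Expr.loc l)) (H.update l (n + 1, m₀, m))

/-- Call-by-value evaluation contexts (left-to-right, except that
    `<`-applications evaluate right-to-left). -/
inductive ECtx (α : Type) : Type where
  | hole : ECtx α
  | appL : ECtx α → Expr α → ECtx α
  | appR : (V : Expr α) → IsValue V → ECtx α → ECtx α
  | uappL : ECtx α → Expr α → ECtx α
  | uappR : (V : Expr α) → IsValue V → ECtx α → ECtx α
  | rappL : ECtx α → Expr α → ECtx α
  | rappR : (V : Expr α) → IsValue V → ECtx α → ECtx α
  | lappL : ECtx α → (V : Expr α) → IsValue V → ECtx α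
  | lappR : Expr α → ECtx α → ECtx α
  | upairL : ECtx α → Expr α → ECtx α
  | upairR : (V : Expr α) → IsValue V → ECtx α → ECtx α
  | opairL : ECtx α → Expr α → ECtx α
  | opairR : (V : Expr α) → IsValue V → ECtx α → ECtx α
  | uletE : ℕ → ℕ → ECtx α → Expr α → ECtx α
  | oletE : ℕ → ℕ → ECtx α → Expr α → ECtx α

def ECtx.plug {α : Type} : ECtx α → Expr α → Expr α
  | .hole, M => M
  | .appL E N, M => Expr.app (E.plug M) N
  | .appR V _ E, M => Expr.app V (E.plug M)
  | .uappL E N, M => Expr.uapp (E.plug M) N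
  | .uappR V _ E, M => Expr.uapp V (E.plug M)
  | .rappL E N, M => Expr.rapp (E.plug M) N
  | .rappR V _ E, M => Expr.rapp V (E.plug M)
  | .lappL E V _, M => Expr.lapp (E.plug M) V
  | .lappR N E, M => Expr.lapp N (E.plug M)
  | .upairL E N, M => Expr.upair (E.plug M) N
  | .upairR V _ E, M => Expr.upair V (E.plug M)
  | .opairL E N, M => Expr.opair (E.plug M) N
  | .opairR V _ E, M => Expr.opair V (E.plug M)
  | .uletE x y E N, M => Expr.ulet x y (E.plug M) N
  | .oletE x y E N, M => Expr.olet x y (E.plug M) N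

/-- Contextual reduction `M | ℋ → M' | ℋ'`. -/
inductive Step {α : Type} (P : OPM α) : Expr α → Heap α → Expr α → Heap α → Prop where
  | exp : ∀ (E : ECtx α) (M M' : Expr α) (H : Heap α),
      BetaStep M M' → Step P (E.plug M) H (E.plug M') H
  | cfg : ∀ (E : ECtx α) (M M' : Expr α) (H H' : Heap α),
      CfgStep P M H M' H' → Step P (E.plug M) H (E.plug M') H'

/-! ## Run-time contexts, focus, heap typing -/

/-- Focus on location `l`: replace every binding of a location other than `l`
    by the empty context. -/
def focus {α : Type} : Ctx α → ℕ → Ctx α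
  | GCtx.empty, _ => GCtx.empty
  | GCtx.bind (Binding.loc l' m), l =>
      if l' = l then GCtx.bind (Binding.loc l' m) else GCtx.empty
  | GCtx.bind (Binding.var x T), _ => GCtx.bind (Binding.var x T)
  | GCtx.comma Γ₁ Γ₂, l => GCtx.comma (focus Γ₁ l) (focus Γ₂ l)
  | GCtx.par Γ₁ Γ₂, l => GCtx.par (focus Γ₁ l) (focus Γ₂ l)

/-- A run-time context is order-defined if every focus graph has a unique
    topological ordering. -/
def orderDefined {α : Type} (Γ : Ctx α) : Prop :=
  ∀ l : ℕ, Graph.Traceable (interpC (focus Γ l))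

def bUsage {α : Type} (P : OPM α) : Binding α → α
  | Binding.loc _ m => m
  | Binding.var _ _ => P.eps

def listProd {α : Type} (P : OPM α) : List α → Option α
  | [] => some P.eps
  | m :: ms => (listProd P ms).bind fun r => P.mul m r

/-- `focusUsage P Γ l u` : the usage projection of `⟨Γ⟩_l` is defined and
    equal to `u` (the ⊙-product of the usages along a topological ordering of
    the focus graph). -/
def focusUsage {α : Type} (P : OPM α) (Γ : Ctx α) (l : ℕ) (u : α) : Prop :=
  ∃ f : Equiv.Perm (Fin (interpC (focus Γ l)).n),
    Graph.IsTopOrder (interpC (focus Γ l)) f ∧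
      listProd P (List.ofFn fun k =>
        bUsage P ((interpC (focus Γ l)).label (f k).val)) = some u

/-- Heap typing `C ⊢ ℋ`. -/
def HeapTy {α : Type} (P : OPM α) (C : Ctx α) (H : Heap α) : Prop :=
  orderDefined C ∧
  ldom C = Heap.dom H ∧
  ∀ (l n : ℕ) (m₀ m : α), H.find l = some (n, m₀, m) →
    (interpC (focus C l)).n = n + 1 ∧
    ∃ u r : α, focusUsage P C l u ∧ P.mul m u = some r ∧ P.le r m₀

/-! ## Auxiliary infrastructure for the heap-tracking theorem -/

section Aux

variable {α : Type} {B : Type}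

/-! ### listProd lemmas -/

lemma listProd_cons (P : OPM α) (a : α) (L : List α) :
    listProd P (a :: L) = (listProd P L).bind fun r => P.mul a r := rfl

lemma listProd_append (P : OPM α) (A B : List α) :
    listProd P (A ++ B) =
      (listProd P A).bind fun a => (listProd P B).bind fun b => P.mul a b := by
  induction A with
  | nil =>
      simp only [List.nil_append, listProd, Option.bind_some]
      cases hB : listProd P B with
      | none => rfl
      | some b => simp [P.eps_mul]
  | cons a A ih =>
      simp only [List.cons_append, listProd_cons, ih]
      cases hA : listProd P A with
      | none => rfl
      | some x =>
          cases hB : listProd P B with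
          | none => simp
          | some y =>
              simp only [Option.bind_some]
              exact (P.mul_assoc a x y).symm

lemma listProd_singleton (P : OPM α) (m : α) : listProd P [m] = some m := by
  simp [listProd, P.mul_eps]

lemma listProd_pair (P : OPM α) (m₁ m₂ : α) : listProd P [m₁, m₂] = P.mul m₁ m₂ := by
  simp [listProd, P.mul_eps]

lemma forall₂_le_refl (P : OPM α) (L : List α) : List.Forall₂ P.le L L := by
  induction L with
  | nil => exact List.Forall₂.nil
  | cons a L ih => exact List.Forall₂.cons (P.le_refl a) ih

lemma listProd_mono (P : OPM α) :
    ∀ {L L' : List α}, List.Forall₂ P.le L L' → ∀ {u' : α}, listProd P L' = some u' →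
      ∃ u, listProd P L = some u ∧ P.le u u' := by
  intro L L' h
  induction h with
  | nil => intro u' hu'; exact ⟨u', hu', P.le_refl u'⟩
  | @cons a a' L L' hle _ ih =>
      intro u' hu'
      simp only [listProd] at hu' ⊢
      cases hT : listProd P L' with
      | none => rw [hT] at hu'; simp at hu'
      | some t' =>
          rw [hT] at hu'
          simp only [Option.bind_some] at hu'
          obtain ⟨t, ht, hlet⟩ := ih hT
          rw [ht]
          simp only [Option.bind_some]
          exact P.mul_mono a a' t t' u' hle hlet hu'

/-! ### Graph extensional equality -/

def GEq (G₁ G₂ : Graph B) : Prop :=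
  G₁.n = G₂.n ∧ (∀ i, i < G₁.n → G₁.label i = G₂.label i) ∧
    ∀ i j, G₁.edge i j ↔ G₂.edge i j

lemma GEq.refl (G : Graph B) : GEq G G :=
  ⟨rfl, fun _ _ => rfl, fun _ _ => Iff.rfl⟩

lemma GEq_of_n_eq_zero {G₁ G₂ : Graph B} (h₁ : G₁.n = 0) (h₂ : G₂.n = 0) : GEq G₁ G₂ := by
  refine ⟨by omega, fun i hi => by omega, fun i j => ?_⟩
  constructor
  · intro h; have := G₁.edge_lt i j h; omega
  · intro h; have := G₂.edge_lt i j h; omega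

lemma Graph.join_edge (X Y : Graph B) (i j : ℕ) :
    (X.join Y).edge i j ↔
      X.edge i j ∨ (X.n ≤ i ∧ X.n ≤ j ∧ Y.edge (i - X.n) (j - X.n)) ∨
        (i < X.n ∧ X.n ≤ j ∧ j < X.n + Y.n) := Iff.rfl

lemma Graph.union_edge (X Y : Graph B) (i j : ℕ) :
    (X.union Y).edge i j ↔
      X.edge i j ∨ (X.n ≤ i ∧ X.n ≤ j ∧ Y.edge (i - X.n) (j - X.n)) := Iff.rfl

lemma GEq.join {A A' C C' : Graph B} (hA : GEq A A') (hC : GEq C C') :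
    GEq (A.join C) (A'.join C') := by
  obtain ⟨hn, hl, he⟩ := hA
  obtain ⟨hn', hl', he'⟩ := hC
  refine ⟨by simp [Graph.join, hn, hn'], ?_, ?_⟩
  · intro i hi
    simp only [Graph.join] at hi ⊢
    rw [← hn]
    by_cases h : i < A.n
    · simp [h, hl i h]
    · simp only [if_neg h]
      exact hl' _ (by omega)
  · intro i j
    simp only [Graph.join_edge, ← hn, he, he', hn']

lemma GEq.union {A A' C C' : Graph B} (hA : GEq A A') (hC : GEq C C') :
    GEq (A.union C) (A'.union C') := by
  obtain ⟨hn, hl, he⟩ := hA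
  obtain ⟨hn', hl', he'⟩ := hC
  refine ⟨by simp [Graph.union, hn, hn'], ?_, ?_⟩
  · intro i hi
    simp only [Graph.union] at hi ⊢
    rw [← hn]
    by_cases h : i < A.n
    · simp [h, hl i h]
    · simp only [if_neg h]
      exact hl' _ (by omega)
  · intro i j
    simp only [Graph.union_edge, ← hn, he, he']

/-! ### context interpretation unfoldings -/

@[simp] lemma focus_empty (l : ℕ) : focus (GCtx.empty : Ctx α) l = GCtx.empty := rfl

@[simp] lemma focus_comma (Γ₁ Γ₂ : Ctx α) (l : ℕ) :
    focus (GCtx.comma Γ₁ Γ₂) l = GCtx.comma (focus Γ₁ l) (focus Γ₂ l) := rfl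

@[simp] lemma focus_par (Γ₁ Γ₂ : Ctx α) (l : ℕ) :
    focus (GCtx.par Γ₁ Γ₂) l = GCtx.par (focus Γ₁ l) (focus Γ₂ l) := rfl

@[simp] lemma focus_loc_self (l : ℕ) (m : α) :
    focus (GCtx.bind (Binding.loc l m)) l = GCtx.bind (Binding.loc l m) := by
  simp [focus]

@[simp] lemma focus_loc_ne {l' l : ℕ} (h : l' ≠ l) (m : α) :
    focus (GCtx.bind (Binding.loc l' m)) l = GCtx.empty := by
  simp [focus, h]

@[simp] lemma interpC_empty : interpC (GCtx.empty : Ctx α) = Graph.zero _ := rfl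

@[simp] lemma interpC_comma (Γ₁ Γ₂ : Ctx α) :
    interpC (GCtx.comma Γ₁ Γ₂) = (interpC Γ₁).join (interpC Γ₂) := rfl

@[simp] lemma interpC_par (Γ₁ Γ₂ : Ctx α) :
    interpC (GCtx.par Γ₁ Γ₂) = (interpC Γ₁).union (interpC Γ₂) := rfl

lemma interpC_loc (l : ℕ) (m : α) :
    interpC (GCtx.bind (Binding.loc l m)) =
      ⟨1, fun _ => Binding.loc l m, fun _ _ => False, fun _ _ h => h.elim⟩ := by
  simp [interpC, GCtx.interpG, Binding.unrB]

@[simp] lemma zero_n [Inhabited B] : (Graph.zero B).n = 0 := rfl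

/-! ### graph-level usage predicate -/

def gUsage (P : OPM α) (G : Graph (Binding α)) (u : α) : Prop :=
  ∃ f : Equiv.Perm (Fin G.n), Graph.IsTopOrder G f ∧
    listProd P (List.ofFn fun k => bUsage P (G.label (f k).val)) = some u

lemma focusUsage_iff (P : OPM α) (Γ : Ctx α) (l : ℕ) (u : α) :
    focusUsage P Γ l u ↔ gUsage P (interpC (focus Γ l)) u := Iff.rfl

/-! ### transfer along GEq -/

lemma GEq.symm {G₁ G₂ : Graph B} (h : GEq G₁ G₂) : GEq G₂ G₁ :=
  ⟨h.1.symm, fun i hi => (h.2.1 i (by rw [h.1]; exact hi)).symm, fun i j => (h.2.2 i j).symm⟩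

private def transPerm {n₁ n₂ : ℕ} (h : n₁ = n₂) (f : Equiv.Perm (Fin n₁)) :
    Equiv.Perm (Fin n₂) :=
  ((finCongr h.symm).trans f).trans (finCongr h)

lemma transPerm_val {n₁ n₂ : ℕ} (h : n₁ = n₂) (f : Equiv.Perm (Fin n₁)) (x : Fin n₂) :
    ((transPerm h f) x).val = (f ((finCongr h.symm) x)).val := rfl

lemma transPerm_symm_val {n₁ n₂ : ℕ} (h : n₁ = n₂) (f : Equiv.Perm (Fin n₁)) (x : Fin n₂) :
    ((transPerm h f).symm x).val = (f.symm ((finCongr h.symm) x)).val := rfl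

lemma GEq.isTopOrder {G₁ G₂ : Graph B} (h : GEq G₁ G₂) (f : Equiv.Perm (Fin G₁.n))
    (hf : G₁.IsTopOrder f) : G₂.IsTopOrder (transPerm h.1 f) := by
  intro i j hij
  have h3 := hf ((finCongr h.1.symm) i) ((finCongr h.1.symm) j)
    (by simpa using (h.2.2 i.val j.val).mpr hij)
  rw [Fin.lt_def] at h3 ⊢
  rw [transPerm_symm_val, transPerm_symm_val]
  exact h3

lemma GEq.traceable {G₁ G₂ : Graph B} (h : GEq G₁ G₂) (ht : G₁.Traceable) :
    G₂.Traceable := by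
  obtain ⟨f, hf, huniq⟩ := ht
  refine ⟨transPerm h.1 f, h.isTopOrder f hf, ?_⟩
  intro g hg
  have hg' : G₁.IsTopOrder (transPerm h.1.symm g) := h.symm.isTopOrder g hg
  have h2 := huniq _ hg'
  refine Equiv.ext fun x => Fin.ext ?_
  rw [← h2, transPerm_val, transPerm_val]
  congr 1

lemma GEq.gUsage {α : Type} {G₁ G₂ : Graph (Binding α)} (P : OPM α) (h : GEq G₁ G₂)
    {u : α} (hu : gUsage P G₁ u) : gUsage P G₂ u := by
  obtain ⟨f, hf, hprod⟩ := hu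
  refine ⟨transPerm h.1 f, h.isTopOrder f hf, ?_⟩
  have hlist : (List.ofFn fun k => bUsage P (G₂.label (((transPerm h.1 f) k)).val)) =
      (List.ofFn fun k => bUsage P (G₁.label ((f k)).val)) := by
    apply List.ext_getElem
    · simp [h.1]
    · intro i h1 h2
      simp only [List.getElem_ofFn]
      congr 1
      rw [transPerm_val]
      have hfin : ((finCongr h.1.symm) ⟨i, by simpa using h1⟩ : Fin G₁.n)
          = ⟨i, by simpa using h2⟩ := Fin.ext (by simp)
      rw [hfin]
      exact (h.2.1 _ (Fin.isLt _)).symm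
  rw [hlist]
  exact hprod

/-! ### Hamiltonian top orders -/

def labList (G : Graph B) (f : Equiv.Perm (Fin G.n)) : List B :=
  List.ofFn fun k => G.label (f k).val

lemma uList_eq (P : OPM α) (G : Graph (Binding α)) (f : Equiv.Perm (Fin G.n)) :
    (List.ofFn fun k => bUsage P (G.label (f k).val)) = (labList G f).map (bUsage P) := by
  simp [labList, List.map_ofFn]; rfl

def IsHam (G : Graph B) (f : Equiv.Perm (Fin G.n)) : Prop :=
  G.IsTopOrder f ∧ ∀ (k : ℕ) (h : k + 1 < G.n),
    G.edge (f ⟨k, Nat.lt_of_succ_lt h⟩).val (f ⟨k + 1, h⟩).val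

lemma isTopOrder_iff' {G : Graph B} {f : Equiv.Perm (Fin G.n)} :
    G.IsTopOrder f ↔ ∀ t u : Fin G.n, G.edge (f t).val (f u).val → t < u := by
  constructor
  · intro h t u he
    have := h (f t) (f u) he
    simpa using this
  · intro h i j he
    have := h (f.symm i) (f.symm j) (by simpa using he)
    exact this

lemma strictMono_of_lt_succ' {n : ℕ} {β : Type*} [Preorder β] (f : Fin n → β)
    (h : ∀ (k : ℕ) (hk : k + 1 < n), f ⟨k, Nat.lt_of_succ_lt hk⟩ < f ⟨k + 1, hk⟩) :
    StrictMono f := by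
  cases n with
  | zero => intro a; exact a.elim0
  | succ n =>
      refine Fin.strictMono_iff_lt_succ.mpr ?_
      intro i
      have h2 := h i.val (by omega)
      have e1 : (⟨i.val, Nat.lt_of_succ_lt (by omega)⟩ : Fin (n+1)) = Fin.castSucc i :=
        Fin.ext rfl
      have e2 : (⟨i.val + 1, by omega⟩ : Fin (n+1)) = i.succ := Fin.ext rfl
      rw [← e1, ← e2]
      exact h2

lemma strictMono_le_apply {n : ℕ} (f : Fin n → Fin n) (hf : StrictMono f) :
    ∀ x : Fin n, x.val ≤ (f x).val := by
  have H : ∀ k : ℕ, ∀ x : Fin n, x.val = k → k ≤ (f x).val := by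
    intro k
    induction k using Nat.strong_induction_on with
    | _ k ih =>
        intro x hx
        cases k with
        | zero => omega
        | succ k =>
            have hkn : k < n := by omega
            have h1 : k ≤ (f ⟨k, hkn⟩).val := ih k (by omega) ⟨k, hkn⟩ rfl
            have h2 : f ⟨k, hkn⟩ < f x := hf (by rw [Fin.lt_def]; simp; omega)
            simp only [Fin.lt_def] at h2
            omega
  exact fun x => H x.val x rfl

lemma perm_strictMono_fix {n : ℕ} (f : Equiv.Perm (Fin n)) (hf : StrictMono (fun x => f x)) :
    ∀ x, f x = x := by
  have hsymm : StrictMono (fun x => f.symm x) := by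
    intro a b hab
    rcases lt_trichotomy (f.symm a) (f.symm b) with h | h | h
    · exact h
    · exfalso
      have hab' : a = b := by
        have := congrArg f h
        simpa using this
      exact absurd hab' (ne_of_lt hab)
    · exfalso
      have h2 := hf h
      simp only [Equiv.apply_symm_apply] at h2
      exact absurd hab (not_lt.mpr h2.le)
  intro x
  have h1 := strictMono_le_apply _ hf x
  have h2 := strictMono_le_apply _ hsymm (f x)
  simp only [Equiv.symm_apply_apply] at h2
  exact Fin.ext (le_antisymm h2 h1)

lemma ham_unique {G : Graph B} {f : Equiv.Perm (Fin G.n)} (hf : IsHam G f)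
    {g : Equiv.Perm (Fin G.n)} (hg : G.IsTopOrder g) : g = f := by
  have hmono : StrictMono (fun t => g.symm (f t)) := by
    apply strictMono_of_lt_succ'
    intro k hk
    exact hg _ _ (hf.2 k hk)
  have hfix := perm_strictMono_fix (f.trans g.symm) hmono
  ext x
  have h3 := hfix x
  have h4 := congrArg g h3
  simp only [Equiv.trans_apply, Equiv.apply_symm_apply] at h4
  exact (h4.symm : g x = f x) ▸ rfl

lemma ham_traceable {G : Graph B} {f : Equiv.Perm (Fin G.n)} (hf : IsHam G f) :
    G.Traceable := ⟨f, hf.1, fun g hg => ham_unique hf hg⟩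

lemma traceable_ham {G : Graph B} (ht : G.Traceable) : ∃ f, IsHam G f := by
  obtain ⟨f, hf, huniq⟩ := ht
  refine ⟨f, hf, ?_⟩
  by_contra hcon
  push_neg at hcon
  obtain ⟨k, hk, hne⟩ := hcon
  have hkn : k < G.n := Nat.lt_of_succ_lt hk
  set a : Fin G.n := ⟨k, hkn⟩ with hadef
  set b : Fin G.n := ⟨k + 1, hk⟩ with hbdef
  have hab : a ≠ b := by simp [hadef, hbdef, Fin.ext_iff]
  set g : Equiv.Perm (Fin G.n) := (Equiv.swap a b).trans f with hgdef
  have hgx : ∀ x, g x = f ((Equiv.swap a b) x) := fun x => rfl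
  have hswapval : ∀ x : Fin G.n, ((Equiv.swap a b) x).val
      = if x.val = k then k + 1 else if x.val = k + 1 then k else x.val := by
    intro x
    rcases eq_or_ne x a with rfl | hxa
    · simp [Equiv.swap_apply_left, hadef, hbdef]
    rcases eq_or_ne x b with rfl | hxb
    · have h1 : (b : Fin G.n).val = k + 1 := rfl
      simp [Equiv.swap_apply_right, hadef, hbdef]
    · rw [Equiv.swap_apply_of_ne_of_ne hxa hxb]
      have h1 : x.val ≠ k := fun hc => hxa (Fin.ext hc)
      have h2 : x.val ≠ k + 1 := fun hc => hxb (Fin.ext hc)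
      simp [h1, h2]
  have hgtop : G.IsTopOrder g := by
    rw [isTopOrder_iff']
    intro t u he
    rw [hgx, hgx] at he
    have h2 := (isTopOrder_iff'.mp hf) _ _ he
    rw [Fin.lt_def] at h2 ⊢
    rw [hswapval, hswapval] at h2
    by_cases hb1 : t.val = k + 1
    · by_cases hb2 : u.val = k
      · exfalso
        apply hne
        have hta : t = b := Fin.ext hb1
        have hua : u = a := Fin.ext hb2
        rw [hta, hua, Equiv.swap_apply_right, Equiv.swap_apply_left] at he
        exact he
      · split_ifs at h2 <;> omega
    · split_ifs at h2 <;> omega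
  have hgf := huniq g hgtop
  have hval : g a = f a := by rw [hgf]
  rw [hgx, Equiv.swap_apply_left] at hval
  exact hab (f.injective hval).symm

/-! ### context-level lemmas -/

@[simp] lemma Graph.join_n (X Y : Graph B) : (X.join Y).n = X.n + Y.n := rfl
@[simp] lemma Graph.union_n (X Y : Graph B) : (X.union Y).n = X.n + Y.n := rfl

lemma mem_toList_fill (G : CtxPat α) (Δ : Ctx α) (b : Binding α) :
    b ∈ GCtx.toList (GPat.fill G Δ) ↔
      b ∈ GCtx.toList (GPat.fill G GCtx.empty) ∨ b ∈ GCtx.toList Δ := by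
  induction G with
  | hole => simp [GPat.fill, GCtx.toList]
  | commaL G' Θ ih => simp only [GPat.fill, GCtx.toList, List.mem_append, ih]; tauto
  | commaR Θ G' ih => simp only [GPat.fill, GCtx.toList, List.mem_append, ih]; tauto
  | parL G' Θ ih => simp only [GPat.fill, GCtx.toList, List.mem_append, ih]; tauto
  | parR Θ G' ih => simp only [GPat.fill, GCtx.toList, List.mem_append, ih]; tauto

lemma ldom_fill (G : CtxPat α) (Δ : Ctx α) :
    ldom (GPat.fill G Δ) = ldom (GPat.fill G GCtx.empty) ∪ ldom Δ := by
  ext x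
  constructor
  · rintro ⟨m, hm⟩
    rcases (mem_toList_fill G Δ _).mp hm with h | h
    · exact Or.inl ⟨m, h⟩
    · exact Or.inr ⟨m, h⟩
  · rintro (⟨m, hm⟩ | ⟨m, hm⟩)
    · exact ⟨m, (mem_toList_fill G Δ _).mpr (Or.inl hm)⟩
    · exact ⟨m, (mem_toList_fill G Δ _).mpr (Or.inr hm)⟩

@[simp] lemma ldom_empty : ldom (GCtx.empty : Ctx α) = ∅ := by
  ext x
  simp only [ldom, GCtx.toList, Set.mem_setOf_eq, List.not_mem_nil, Set.mem_empty_iff_false]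
  exact ⟨fun ⟨m, h⟩ => h, False.elim⟩

@[simp] lemma ldom_bind_loc (l : ℕ) (m : α) :
    ldom (GCtx.bind (Binding.loc l m) : Ctx α) = {l} := by
  ext x
  simp only [ldom, Set.mem_setOf_eq, GCtx.toList, List.mem_singleton, Set.mem_singleton_iff]
  constructor
  · rintro ⟨m', hm⟩; cases hm; rfl
  · rintro rfl; exact ⟨m, rfl⟩

lemma ldom_comma (Γ₁ Γ₂ : Ctx α) : ldom (GCtx.comma Γ₁ Γ₂) = ldom Γ₁ ∪ ldom Γ₂ := by
  ext x
  simp only [ldom, Set.mem_setOf_eq, Set.mem_union, GCtx.toList, List.mem_append]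
  constructor
  · rintro ⟨m, hm | hm⟩
    · exact Or.inl ⟨m, hm⟩
    · exact Or.inr ⟨m, hm⟩
  · rintro (⟨m, hm⟩ | ⟨m, hm⟩)
    · exact ⟨m, Or.inl hm⟩
    · exact ⟨m, Or.inr hm⟩

lemma ldom_par (Γ₁ Γ₂ : Ctx α) : ldom (GCtx.par Γ₁ Γ₂) = ldom Γ₁ ∪ ldom Γ₂ := by
  ext x
  simp only [ldom, Set.mem_setOf_eq, Set.mem_union, GCtx.toList, List.mem_append]
  constructor
  · rintro ⟨m, hm | hm⟩
    · exact Or.inl ⟨m, hm⟩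
    · exact Or.inr ⟨m, hm⟩
  · rintro (⟨m, hm⟩ | ⟨m, hm⟩)
    · exact ⟨m, Or.inl hm⟩
    · exact ⟨m, Or.inr hm⟩

@[simp] lemma ldom_pair (l : ℕ) (m₁ m₂ : α) :
    ldom (GCtx.comma (GCtx.bind (Binding.loc l m₁))
      (GCtx.bind (Binding.loc l m₂)) : Ctx α) = {l} := by
  rw [ldom_comma, ldom_bind_loc, ldom_bind_loc]; simp

lemma focus_fill_n (G : CtxPat α) (Δ : Ctx α) (l : ℕ) :
    (interpC (focus (GPat.fill G Δ) l)).n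
      = (interpC (focus (GPat.fill G GCtx.empty) l)).n + (interpC (focus Δ l)).n := by
  induction G with
  | hole => simp [GPat.fill]
  | commaL G' Θ ih => simp only [GPat.fill, focus_comma, interpC_comma, Graph.join_n, ih]; omega
  | commaR Θ G' ih => simp only [GPat.fill, focus_comma, interpC_comma, Graph.join_n, ih]; omega
  | parL G' Θ ih => simp only [GPat.fill, focus_par, interpC_par, Graph.union_n, ih]; omega
  | parR Θ G' ih => simp only [GPat.fill, focus_par, interpC_par, Graph.union_n, ih]; omega

lemma isRuntime_comma {Γ₁ Γ₂ : Ctx α} (h : isRuntime (GCtx.comma Γ₁ Γ₂)) :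
    isRuntime Γ₁ ∧ isRuntime Γ₂ :=
  ⟨fun b hb => h b (by simp [GCtx.toList, List.mem_append]; exact Or.inl hb),
   fun b hb => h b (by simp [GCtx.toList, List.mem_append]; exact Or.inr hb)⟩

lemma isRuntime_par {Γ₁ Γ₂ : Ctx α} (h : isRuntime (GCtx.par Γ₁ Γ₂)) :
    isRuntime Γ₁ ∧ isRuntime Γ₂ :=
  ⟨fun b hb => h b (by simp [GCtx.toList, List.mem_append]; exact Or.inl hb),
   fun b hb => h b (by simp [GCtx.toList, List.mem_append]; exact Or.inr hb)⟩

lemma focus_n_zero {Γ : Ctx α} (hr : isRuntime Γ) {l : ℕ} (hl : l ∉ ldom Γ) :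
    (interpC (focus Γ l)).n = 0 := by
  induction Γ with
  | empty => rfl
  | bind b =>
      obtain ⟨l', m, rfl⟩ := hr b (by simp [GCtx.toList])
      have hne : l' ≠ l := by
        rintro rfl
        exact hl (by simp)
      rw [focus_loc_ne hne]
      rfl
  | comma Γ₁ Γ₂ ih₁ ih₂ =>
      rw [ldom_comma] at hl
      obtain ⟨h1, h2⟩ := isRuntime_comma hr
      simp only [focus_comma, interpC_comma, Graph.join_n]
      rw [ih₁ h1 (fun h => hl (Or.inl h)), ih₂ h2 (fun h => hl (Or.inr h))]
  | par Γ₁ Γ₂ ih₁ ih₂ =>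
      rw [ldom_par] at hl
      obtain ⟨h1, h2⟩ := isRuntime_par hr
      simp only [focus_par, interpC_par, Graph.union_n]
      rw [ih₁ h1 (fun h => hl (Or.inl h)), ih₂ h2 (fun h => hl (Or.inr h))]

lemma focus_n_pos {Γ : Ctx α} {l : ℕ} (hl : l ∈ ldom Γ) :
    0 < (interpC (focus Γ l)).n := by
  induction Γ with
  | empty => simp at hl
  | bind b =>
      obtain ⟨m, hm⟩ := hl
      simp only [GCtx.toList, List.mem_singleton] at hm
      subst hm
      rw [focus_loc_self, interpC_loc]
      exact Nat.one_pos
  | comma Γ₁ Γ₂ ih₁ ih₂ =>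
      rw [ldom_comma] at hl
      simp only [focus_comma, interpC_comma, Graph.join_n]
      rcases hl with h | h
      · have := ih₁ h; omega
      · have := ih₂ h; omega
  | par Γ₁ Γ₂ ih₁ ih₂ =>
      rw [ldom_par] at hl
      simp only [focus_par, interpC_par, Graph.union_n]
      rcases hl with h | h
      · have := ih₁ h; omega
      · have := ih₂ h; omega

lemma fill_congr (G : CtxPat α) {Δ₁ Δ₂ : Ctx α} {l : ℕ}
    (h : GEq (interpC (focus Δ₁ l)) (interpC (focus Δ₂ l))) :
    GEq (interpC (focus (GPat.fill G Δ₁) l)) (interpC (focus (GPat.fill G Δ₂) l)) := by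
  induction G with
  | hole => exact h
  | commaL G' Θ ih =>
      simp only [GPat.fill, focus_comma, interpC_comma]
      exact GEq.join ih (GEq.refl _)
  | commaR Θ G' ih =>
      simp only [GPat.fill, focus_comma, interpC_comma]
      exact GEq.join (GEq.refl _) ih
  | parL G' Θ ih =>
      simp only [GPat.fill, focus_par, interpC_par]
      exact GEq.union ih (GEq.refl _)
  | parR Θ G' ih =>
      simp only [GPat.fill, focus_par, interpC_par]
      exact GEq.union (GEq.refl _) ih

/-! ### transitivity of interpreted edges -/

lemma interp_edge_trans (Γ : Ctx α) :
    ∀ i j k, (interpC Γ).edge i j → (interpC Γ).edge j k → (interpC Γ).edge i k := by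
  induction Γ with
  | empty => intro i j k h _; exact h.elim
  | bind b =>
      intro i j k h _
      exfalso
      unfold interpC GCtx.interpG at h
      split at h <;> exact h
  | comma Γ₁ Γ₂ ih₁ ih₂ =>
      intro i j k h1 h2
      rw [interpC_comma, Graph.join_edge] at h1 h2 ⊢
      rcases h1 with h1 | ⟨hi, hj, h1⟩ | ⟨hi, hj, hjk⟩
      · have hb := (interpC Γ₁).edge_lt _ _ h1
        rcases h2 with h2 | ⟨hj', hk, h2⟩ | ⟨hj', hk, hk2⟩
        · exact Or.inl (ih₁ _ _ _ h1 h2)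
        · exfalso; omega
        · exact Or.inr (Or.inr ⟨hb.1, hk, hk2⟩)
      · rcases h2 with h2 | ⟨hj', hk, h2⟩ | ⟨hj', hk2, hk3⟩
        · exfalso; have := (interpC Γ₁).edge_lt _ _ h2; omega
        · exact Or.inr (Or.inl ⟨hi, hk, ih₂ _ _ _ h1 h2⟩)
        · exfalso; omega
      · rcases h2 with h2 | ⟨hj', hk, h2⟩ | ⟨hj', hk2, hk3⟩
        · exfalso; have := (interpC Γ₁).edge_lt _ _ h2; omega
        · have hb := (interpC Γ₂).edge_lt _ _ h2
          exact Or.inr (Or.inr ⟨hi, hk, by omega⟩)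
        · exfalso; omega
  | par Γ₁ Γ₂ ih₁ ih₂ =>
      intro i j k h1 h2
      rw [interpC_par, Graph.union_edge] at h1 h2 ⊢
      rcases h1 with h1 | ⟨hi, hj, h1⟩
      · have hb := (interpC Γ₁).edge_lt _ _ h1
        rcases h2 with h2 | ⟨hj', hk, h2⟩
        · exact Or.inl (ih₁ _ _ _ h1 h2)
        · exfalso; omega
      · rcases h2 with h2 | ⟨hj', hk, h2⟩
        · exfalso; have := (interpC Γ₁).edge_lt _ _ h2; omega
        · exact Or.inr ⟨hi, hk, ih₂ _ _ _ h1 h2⟩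

/-! ### edge helpers for join and union -/

lemma Graph.join_label (X Y : Graph B) (i : ℕ) :
    (X.join Y).label i = if i < X.n then X.label i else Y.label (i - X.n) := rfl

lemma Graph.union_label (X Y : Graph B) (i : ℕ) :
    (X.union Y).label i = if i < X.n then X.label i else Y.label (i - X.n) := rfl

lemma join_edge_lo_lo {X Y : Graph B} {i j : ℕ} (hi : i < X.n) (hj : j < X.n) :
    (X.join Y).edge i j ↔ X.edge i j := by
  rw [Graph.join_edge]
  constructor
  · rintro (h | ⟨h1, h2, h3⟩ | ⟨h1, h2, h3⟩)
    · exact h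
    · omega
    · omega
  · exact Or.inl

lemma join_edge_hi_hi {X Y : Graph B} {i j : ℕ} (hi : X.n ≤ i) (hj : X.n ≤ j) :
    (X.join Y).edge i j ↔ Y.edge (i - X.n) (j - X.n) := by
  rw [Graph.join_edge]
  constructor
  · rintro (h | ⟨h1, h2, h3⟩ | ⟨h1, h2, h3⟩)
    · have := X.edge_lt _ _ h; omega
    · exact h3
    · omega
  · intro h; exact Or.inr (Or.inl ⟨hi, hj, h⟩)

lemma join_edge_hi_lo {X Y : Graph B} {i j : ℕ} (hi : X.n ≤ i) (hj : j < X.n) :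
    ¬ (X.join Y).edge i j := by
  rw [Graph.join_edge]
  rintro (h | ⟨h1, h2, h3⟩ | ⟨h1, h2, h3⟩)
  · have := X.edge_lt _ _ h; omega
  · omega
  · omega

lemma join_edge_cross {X Y : Graph B} {i j : ℕ} (hi : i < X.n) (hj : X.n ≤ j)
    (hj2 : j < X.n + Y.n) : (X.join Y).edge i j :=
  Or.inr (Or.inr ⟨hi, hj, hj2⟩)

lemma union_edge_lo_lo {X Y : Graph B} {i j : ℕ} (hi : i < X.n) (hj : j < X.n) :
    (X.union Y).edge i j ↔ X.edge i j := by
  rw [Graph.union_edge]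
  constructor
  · rintro (h | ⟨h1, h2, h3⟩)
    · exact h
    · omega
  · exact Or.inl

lemma union_edge_hi_hi {X Y : Graph B} {i j : ℕ} (hi : X.n ≤ i) (hj : X.n ≤ j) :
    (X.union Y).edge i j ↔ Y.edge (i - X.n) (j - X.n) := by
  rw [Graph.union_edge]
  constructor
  · rintro (h | ⟨h1, h2, h3⟩)
    · have := X.edge_lt _ _ h; omega
    · exact h3
  · intro h; exact Or.inr ⟨hi, hj, h⟩

lemma union_edge_hi_lo {X Y : Graph B} {i j : ℕ} (hi : X.n ≤ i) (hj : j < X.n) :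
    ¬ (X.union Y).edge i j := by
  rw [Graph.union_edge]
  rintro (h | ⟨h1, h2, h3⟩)
  · have := X.edge_lt _ _ h; omega
  · omega

lemma union_edge_lo_hi {X Y : Graph B} {i j : ℕ} (hi : i < X.n) (hj : X.n ≤ j) :
    ¬ (X.union Y).edge i j := by
  rw [Graph.union_edge]
  rintro (h | ⟨h1, h2, h3⟩)
  · have := X.edge_lt _ _ h; omega
  · omega

/-! ### vertex replacement relation -/

def phiIdx (p b i : ℕ) : ℕ := if i < p then i else i + b - 1

lemma phi_of_lt {p b i : ℕ} (h : i < p) : phiIdx p b i = i := if_pos h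

lemma phi_of_ge {p b i : ℕ} (h : p ≤ i) : phiIdx p b i = i + b - 1 :=
  if_neg (by omega)

structure ReplV (G₁ G₂ : Graph B) (p : ℕ) (b₀ : B) (L : List B) : Prop where
  hp : p < G₁.n
  hn : G₂.n + 1 = G₁.n + L.length
  hb0 : G₁.label p = b₀
  hlabL : ∀ i (h : i < L.length), G₂.label (p + i) = L.get ⟨i, h⟩
  hlab : ∀ i, i < G₁.n → i ≠ p → G₂.label (phiIdx p L.length i) = G₁.label i
  hee : ∀ i j, i < G₁.n → j < G₁.n → i ≠ p → j ≠ p →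
    (G₂.edge (phiIdx p L.length i) (phiIdx p L.length j) ↔ G₁.edge i j)
  heb : ∀ i k, i < G₁.n → i ≠ p → k < L.length →
    (G₂.edge (phiIdx p L.length i) (p + k) ↔ G₁.edge i p)
  hbe : ∀ i k, i < G₁.n → i ≠ p → k < L.length →
    (G₂.edge (p + k) (phiIdx p L.length i) ↔ G₁.edge p i)
  hbb : ∀ k k', k < L.length → k' < L.length → (G₂.edge (p + k) (p + k') ↔ k < k')
  hpp : ¬ G₁.edge p p

lemma phi_lt {p b n₁ n₂ i : ℕ} (hp : p < n₁) (hn : n₂ + 1 = n₁ + b)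
    (hi : i < n₁) (hip : i ≠ p) : phiIdx p b i < n₂ := by
  unfold phiIdx; split <;> omega

lemma phi_ge_of_ge {p b n₁ n₂ i : ℕ} (hp : p < n₁) (hn : n₂ + 1 = n₁ + b)
    (hi : n₁ ≤ i) : n₂ ≤ phiIdx p b i := by
  unfold phiIdx; split <;> omega

lemma ReplV.joinRight {G₁ G₂ D : Graph B} {p : ℕ} {b₀ : B} {L : List B}
    (h : ReplV G₁ G₂ p b₀ L) : ReplV (G₁.join D) (G₂.join D) p b₀ L := by
  obtain ⟨hp, hn, hb0, hlabL, hlab, hee, heb, hbe, hbb, hpp⟩ := h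
  have hblk : ∀ k, k < L.length → p + k < G₂.n := fun k hk => by omega
  refine ⟨by simp; omega, by simp; omega, ?_, ?_, ?_, ?_, ?_, ?_, ?_, ?_⟩
  · rw [Graph.join_label, if_pos hp]; exact hb0
  · intro i hi
    rw [Graph.join_label, if_pos (hblk i hi)]; exact hlabL i hi
  · intro i hi hip
    simp only [Graph.join_n] at hi
    by_cases h1 : i < G₁.n
    · rw [Graph.join_label, if_pos (phi_lt hp hn h1 hip), Graph.join_label, if_pos h1]
      exact hlab i h1 hip
    · rw [Graph.join_label, if_neg (by have := phi_ge_of_ge hp hn (by omega : G₁.n ≤ i); omega),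
        Graph.join_label, if_neg h1]
      congr 1
      rw [phi_of_ge (by omega)]
      omega
  · intro i j hi hj hip hjp
    simp only [Graph.join_n] at hi hj
    by_cases h1 : i < G₁.n <;> by_cases h2 : j < G₁.n
    · rw [join_edge_lo_lo (phi_lt hp hn h1 hip) (phi_lt hp hn h2 hjp),
        join_edge_lo_lo h1 h2]
      exact hee i j h1 h2 hip hjp
    · refine iff_of_true ?_ ?_
      · refine join_edge_cross (phi_lt hp hn h1 hip) (phi_ge_of_ge hp hn (by omega)) ?_
        rw [phi_of_ge (by omega)]; omega
      · exact join_edge_cross h1 (by omega) (by omega)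
    · refine iff_of_false ?_ ?_
      · exact join_edge_hi_lo (phi_ge_of_ge hp hn (by omega)) (phi_lt hp hn h2 hjp)
      · exact join_edge_hi_lo (by omega) h2
    · rw [join_edge_hi_hi (phi_ge_of_ge hp hn (by omega)) (phi_ge_of_ge hp hn (by omega)),
        join_edge_hi_hi (by omega : G₁.n ≤ i) (by omega : G₁.n ≤ j)]
      rw [phi_of_ge (by omega : p ≤ i), phi_of_ge (by omega : p ≤ j)]
      have e1 : i + L.length - 1 - G₂.n = i - G₁.n := by omega
      have e2 : j + L.length - 1 - G₂.n = j - G₁.n := by omega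
      rw [e1, e2]
  · intro i k hi hip hk
    simp only [Graph.join_n] at hi
    by_cases h1 : i < G₁.n
    · rw [join_edge_lo_lo (phi_lt hp hn h1 hip) (hblk k hk), join_edge_lo_lo h1 hp]
      exact heb i k h1 hip hk
    · refine iff_of_false ?_ ?_
      · exact join_edge_hi_lo (phi_ge_of_ge hp hn (by omega)) (hblk k hk)
      · exact join_edge_hi_lo (by omega) hp
  · intro i k hi hip hk
    simp only [Graph.join_n] at hi
    by_cases h1 : i < G₁.n
    · rw [join_edge_lo_lo (hblk k hk) (phi_lt hp hn h1 hip), join_edge_lo_lo hp h1]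
      exact hbe i k h1 hip hk
    · refine iff_of_true ?_ ?_
      · refine join_edge_cross (hblk k hk) (phi_ge_of_ge hp hn (by omega)) ?_
        rw [phi_of_ge (by omega)]
        omega
      · exact join_edge_cross hp (by omega) (by omega)
  · intro k k' hk hk'
    rw [join_edge_lo_lo (hblk k hk) (hblk k' hk')]
    exact hbb k k' hk hk'
  · rw [join_edge_lo_lo hp hp]; exact hpp

lemma ReplV.joinLeft {G₁ G₂ D : Graph B} {p : ℕ} {b₀ : B} {L : List B}
    (h : ReplV G₁ G₂ p b₀ L) : ReplV (D.join G₁) (D.join G₂) (D.n + p) b₀ L := by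
  obtain ⟨hp, hn, hb0, hlabL, hlab, hee, heb, hbe, hbb, hpp⟩ := h
  have hblk : ∀ k, k < L.length → p + k < G₂.n := fun k hk => by omega
  have hphi : ∀ i, D.n ≤ i → i ≠ D.n + p →
      phiIdx (D.n + p) L.length i = D.n + phiIdx p L.length (i - D.n) := by
    intro i hi hip
    unfold phiIdx
    split <;> split <;> omega
  have hphilo : ∀ i, i < D.n → phiIdx (D.n + p) L.length i = i := by
    intro i hi; exact phi_of_lt (by omega)
  refine ⟨by simp; omega, by simp; omega, ?_, ?_, ?_, ?_, ?_, ?_, ?_, ?_⟩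
  · rw [Graph.join_label, if_neg (by omega)]
    have e : D.n + p - D.n = p := by omega
    rw [e]; exact hb0
  · intro i hi
    rw [Graph.join_label, if_neg (by omega)]
    have e : D.n + p + i - D.n = p + i := by omega
    rw [e]; exact hlabL i hi
  · intro i hi hip
    simp only [Graph.join_n] at hi
    by_cases h1 : i < D.n
    · rw [hphilo i h1, Graph.join_label, if_pos h1, Graph.join_label, if_pos h1]
    · have hig : D.n ≤ i := by omega
      have hipp : i - D.n ≠ p := by omega
      rw [hphi i hig hip, Graph.join_label,
        if_neg (by omega), Graph.join_label, if_neg h1]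
      have e : D.n + phiIdx p L.length (i - D.n) - D.n = phiIdx p L.length (i - D.n) := by omega
      rw [e]
      exact hlab (i - D.n) (by omega) hipp
  · intro i j hi hj hip hjp
    simp only [Graph.join_n] at hi hj
    by_cases h1 : i < D.n <;> by_cases h2 : j < D.n
    · rw [hphilo i h1, hphilo j h2, join_edge_lo_lo h1 h2, join_edge_lo_lo h1 h2]
    · have hjg : D.n ≤ j := by omega
      have hjpp : j - D.n ≠ p := by omega
      refine iff_of_true ?_ (join_edge_cross h1 hjg (by omega))
      rw [hphilo i h1, hphi j hjg hjp]
      refine join_edge_cross h1 (by omega) ?_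
      have := phi_lt hp hn (by omega : j - D.n < G₁.n) hjpp
      omega
    · refine iff_of_false ?_ (join_edge_hi_lo (by omega) h2)
      rw [hphilo j h2, hphi i (by omega) hip]
      exact join_edge_hi_lo (by omega) h2
    · have hig : D.n ≤ i := by omega
      have hjg : D.n ≤ j := by omega
      rw [hphi i hig hip, hphi j hjg hjp,
        join_edge_hi_hi (by omega : D.n ≤ D.n + phiIdx p L.length (i - D.n)) (by omega),
        join_edge_hi_hi hig hjg]
      have e1 : D.n + phiIdx p L.length (i - D.n) - D.n = phiIdx p L.length (i - D.n) := by omega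
      have e2 : D.n + phiIdx p L.length (j - D.n) - D.n = phiIdx p L.length (j - D.n) := by omega
      rw [e1, e2]
      exact hee (i - D.n) (j - D.n) (by omega) (by omega) (by omega) (by omega)
  · intro i k hi hip hk
    simp only [Graph.join_n] at hi
    by_cases h1 : i < D.n
    · rw [hphilo i h1]
      refine iff_of_true ?_ (join_edge_cross h1 (by omega) (by omega))
      refine join_edge_cross h1 (by omega) ?_
      have := hblk k hk
      omega
    · have hig : D.n ≤ i := by omega
      rw [hphi i hig hip,
        join_edge_hi_hi (by omega : D.n ≤ D.n + phiIdx p L.length (i - D.n)) (by omega),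
        join_edge_hi_hi hig (by omega)]
      have e1 : D.n + phiIdx p L.length (i - D.n) - D.n = phiIdx p L.length (i - D.n) := by omega
      have e2 : D.n + p + k - D.n = p + k := by omega
      have e3 : D.n + p - D.n = p := by omega
      rw [e1, e2, e3]
      exact heb (i - D.n) k (by omega) (by omega) hk
  · intro i k hi hip hk
    simp only [Graph.join_n] at hi
    by_cases h1 : i < D.n
    · rw [hphilo i h1]
      refine iff_of_false (join_edge_hi_lo (by omega) h1) (join_edge_hi_lo (by omega) h1)
    · have hig : D.n ≤ i := by omega
      rw [hphi i hig hip,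
        join_edge_hi_hi (by omega : D.n ≤ D.n + p + k) (by omega),
        join_edge_hi_hi (by omega : D.n ≤ D.n + p) hig]
      have e1 : D.n + phiIdx p L.length (i - D.n) - D.n = phiIdx p L.length (i - D.n) := by omega
      have e2 : D.n + p + k - D.n = p + k := by omega
      have e3 : D.n + p - D.n = p := by omega
      rw [e1, e2, e3]
      exact hbe (i - D.n) k (by omega) (by omega) hk
  · intro k k' hk hk'
    rw [join_edge_hi_hi (by omega : D.n ≤ D.n + p + k) (by omega)]
    have e1 : D.n + p + k - D.n = p + k := by omega
    have e2 : D.n + p + k' - D.n = p + k' := by omega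
    rw [e1, e2]
    exact hbb k k' hk hk'
  · rw [join_edge_hi_hi (by omega : D.n ≤ D.n + p) (by omega)]
    have e : D.n + p - D.n = p := by omega
    rw [e]
    exact hpp

lemma ReplV.unionRight {G₁ G₂ D : Graph B} {p : ℕ} {b₀ : B} {L : List B}
    (h : ReplV G₁ G₂ p b₀ L) : ReplV (G₁.union D) (G₂.union D) p b₀ L := by
  obtain ⟨hp, hn, hb0, hlabL, hlab, hee, heb, hbe, hbb, hpp⟩ := h
  have hblk : ∀ k, k < L.length → p + k < G₂.n := fun k hk => by omega
  refine ⟨by simp; omega, by simp; omega, ?_, ?_, ?_, ?_, ?_, ?_, ?_, ?_⟩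
  · rw [Graph.union_label, if_pos hp]; exact hb0
  · intro i hi
    rw [Graph.union_label, if_pos (hblk i hi)]; exact hlabL i hi
  · intro i hi hip
    simp only [Graph.union_n] at hi
    by_cases h1 : i < G₁.n
    · rw [Graph.union_label, if_pos (phi_lt hp hn h1 hip), Graph.union_label, if_pos h1]
      exact hlab i h1 hip
    · rw [Graph.union_label, if_neg (by have := phi_ge_of_ge hp hn (by omega : G₁.n ≤ i); omega),
        Graph.union_label, if_neg h1]
      congr 1
      rw [phi_of_ge (by omega)]
      omega
  · intro i j hi hj hip hjp
    simp only [Graph.union_n] at hi hj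
    by_cases h1 : i < G₁.n <;> by_cases h2 : j < G₁.n
    · rw [union_edge_lo_lo (phi_lt hp hn h1 hip) (phi_lt hp hn h2 hjp),
        union_edge_lo_lo h1 h2]
      exact hee i j h1 h2 hip hjp
    · refine iff_of_false ?_ (union_edge_lo_hi h1 (by omega))
      exact union_edge_lo_hi (phi_lt hp hn h1 hip) (phi_ge_of_ge hp hn (by omega))
    · refine iff_of_false ?_ (union_edge_hi_lo (by omega) h2)
      exact union_edge_hi_lo (phi_ge_of_ge hp hn (by omega)) (phi_lt hp hn h2 hjp)
    · rw [union_edge_hi_hi (phi_ge_of_ge hp hn (by omega)) (phi_ge_of_ge hp hn (by omega)),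
        union_edge_hi_hi (by omega : G₁.n ≤ i) (by omega : G₁.n ≤ j)]
      rw [phi_of_ge (by omega : p ≤ i), phi_of_ge (by omega : p ≤ j)]
      have e1 : i + L.length - 1 - G₂.n = i - G₁.n := by omega
      have e2 : j + L.length - 1 - G₂.n = j - G₁.n := by omega
      rw [e1, e2]
  · intro i k hi hip hk
    simp only [Graph.union_n] at hi
    by_cases h1 : i < G₁.n
    · rw [union_edge_lo_lo (phi_lt hp hn h1 hip) (hblk k hk), union_edge_lo_lo h1 hp]
      exact heb i k h1 hip hk
    · refine iff_of_false ?_ (union_edge_hi_lo (by omega) hp)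
      exact union_edge_hi_lo (phi_ge_of_ge hp hn (by omega)) (hblk k hk)
  · intro i k hi hip hk
    simp only [Graph.union_n] at hi
    by_cases h1 : i < G₁.n
    · rw [union_edge_lo_lo (hblk k hk) (phi_lt hp hn h1 hip), union_edge_lo_lo hp h1]
      exact hbe i k h1 hip hk
    · refine iff_of_false ?_ (union_edge_lo_hi hp (by omega))
      exact union_edge_lo_hi (hblk k hk) (phi_ge_of_ge hp hn (by omega))
  · intro k k' hk hk'
    rw [union_edge_lo_lo (hblk k hk) (hblk k' hk')]
    exact hbb k k' hk hk'
  · rw [union_edge_lo_lo hp hp]; exact hpp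

lemma ReplV.unionLeft {G₁ G₂ D : Graph B} {p : ℕ} {b₀ : B} {L : List B}
    (h : ReplV G₁ G₂ p b₀ L) : ReplV (D.union G₁) (D.union G₂) (D.n + p) b₀ L := by
  obtain ⟨hp, hn, hb0, hlabL, hlab, hee, heb, hbe, hbb, hpp⟩ := h
  have hblk : ∀ k, k < L.length → p + k < G₂.n := fun k hk => by omega
  have hphi : ∀ i, D.n ≤ i → i ≠ D.n + p →
      phiIdx (D.n + p) L.length i = D.n + phiIdx p L.length (i - D.n) := by
    intro i hi hip
    unfold phiIdx
    split <;> split <;> omega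
  have hphilo : ∀ i, i < D.n → phiIdx (D.n + p) L.length i = i := by
    intro i hi; exact phi_of_lt (by omega)
  refine ⟨by simp; omega, by simp; omega, ?_, ?_, ?_, ?_, ?_, ?_, ?_, ?_⟩
  · rw [Graph.union_label, if_neg (by omega)]
    have e : D.n + p - D.n = p := by omega
    rw [e]; exact hb0
  · intro i hi
    rw [Graph.union_label, if_neg (by omega)]
    have e : D.n + p + i - D.n = p + i := by omega
    rw [e]; exact hlabL i hi
  · intro i hi hip
    simp only [Graph.union_n] at hi
    by_cases h1 : i < D.n
    · rw [hphilo i h1, Graph.union_label, if_pos h1, Graph.union_label, if_pos h1]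
    · have hig : D.n ≤ i := by omega
      have hipp : i - D.n ≠ p := by omega
      rw [hphi i hig hip, Graph.union_label,
        if_neg (by omega), Graph.union_label, if_neg h1]
      have e : D.n + phiIdx p L.length (i - D.n) - D.n = phiIdx p L.length (i - D.n) := by omega
      rw [e]
      exact hlab (i - D.n) (by omega) hipp
  · intro i j hi hj hip hjp
    simp only [Graph.union_n] at hi hj
    by_cases h1 : i < D.n <;> by_cases h2 : j < D.n
    · rw [hphilo i h1, hphilo j h2, union_edge_lo_lo h1 h2, union_edge_lo_lo h1 h2]
    · have hjg : D.n ≤ j := by omega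
      refine iff_of_false ?_ (union_edge_lo_hi h1 hjg)
      rw [hphilo i h1, hphi j hjg hjp]
      exact union_edge_lo_hi h1 (by omega)
    · refine iff_of_false ?_ (union_edge_hi_lo (by omega) h2)
      rw [hphilo j h2, hphi i (by omega) hip]
      exact union_edge_hi_lo (by omega) h2
    · have hig : D.n ≤ i := by omega
      have hjg : D.n ≤ j := by omega
      rw [hphi i hig hip, hphi j hjg hjp,
        union_edge_hi_hi (by omega : D.n ≤ D.n + phiIdx p L.length (i - D.n)) (by omega),
        union_edge_hi_hi hig hjg]
      have e1 : D.n + phiIdx p L.length (i - D.n) - D.n = phiIdx p L.length (i - D.n) := by omega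
      have e2 : D.n + phiIdx p L.length (j - D.n) - D.n = phiIdx p L.length (j - D.n) := by omega
      rw [e1, e2]
      exact hee (i - D.n) (j - D.n) (by omega) (by omega) (by omega) (by omega)
  · intro i k hi hip hk
    simp only [Graph.union_n] at hi
    by_cases h1 : i < D.n
    · rw [hphilo i h1]
      refine iff_of_false (union_edge_lo_hi h1 (by omega)) (union_edge_lo_hi h1 (by omega))
    · have hig : D.n ≤ i := by omega
      rw [hphi i hig hip,
        union_edge_hi_hi (by omega : D.n ≤ D.n + phiIdx p L.length (i - D.n)) (by omega),
        union_edge_hi_hi hig (by omega)]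
      have e1 : D.n + phiIdx p L.length (i - D.n) - D.n = phiIdx p L.length (i - D.n) := by omega
      have e2 : D.n + p + k - D.n = p + k := by omega
      have e3 : D.n + p - D.n = p := by omega
      rw [e1, e2, e3]
      exact heb (i - D.n) k (by omega) (by omega) hk
  · intro i k hi hip hk
    simp only [Graph.union_n] at hi
    by_cases h1 : i < D.n
    · rw [hphilo i h1]
      refine iff_of_false (union_edge_hi_lo (by omega) h1) (union_edge_hi_lo (by omega) h1)
    · have hig : D.n ≤ i := by omega
      rw [hphi i hig hip,
        union_edge_hi_hi (by omega : D.n ≤ D.n + p + k) (by omega),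
        union_edge_hi_hi (by omega : D.n ≤ D.n + p) hig]
      have e1 : D.n + phiIdx p L.length (i - D.n) - D.n = phiIdx p L.length (i - D.n) := by omega
      have e2 : D.n + p + k - D.n = p + k := by omega
      have e3 : D.n + p - D.n = p := by omega
      rw [e1, e2, e3]
      exact hbe (i - D.n) k (by omega) (by omega) hk
  · intro k k' hk hk'
    rw [union_edge_hi_hi (by omega : D.n ≤ D.n + p + k) (by omega)]
    have e1 : D.n + p + k - D.n = p + k := by omega
    have e2 : D.n + p + k' - D.n = p + k' := by omega
    rw [e1, e2]
    exact hbb k k' hk hk'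
  · rw [union_edge_hi_hi (by omega : D.n ≤ D.n + p) (by omega)]
    have e : D.n + p - D.n = p := by omega
    rw [e]
    exact hpp

lemma replV_fill (G : CtxPat α) {l : ℕ} {m' : α} {Δ : Ctx α} {b₀ : Binding α}
    {L : List (Binding α)}
    (hbase : ReplV (interpC (focus (GCtx.bind (Binding.loc l m')) l))
      (interpC (focus Δ l)) 0 b₀ L) :
    ∃ p, ReplV (interpC (focus (GPat.fill G (GCtx.bind (Binding.loc l m'))) l))
      (interpC (focus (GPat.fill G Δ) l)) p b₀ L := by
  induction G with
  | hole => exact ⟨0, hbase⟩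
  | commaL G' Θ ih =>
      obtain ⟨p, hp⟩ := ih
      exact ⟨p, by simpa only [GPat.fill, focus_comma, interpC_comma] using hp.joinRight⟩
  | commaR Θ G' ih =>
      obtain ⟨p, hp⟩ := ih
      exact ⟨(interpC (focus Θ l)).n + p,
        by simpa only [GPat.fill, focus_comma, interpC_comma] using hp.joinLeft⟩
  | parL G' Θ ih =>
      obtain ⟨p, hp⟩ := ih
      exact ⟨p, by simpa only [GPat.fill, focus_par, interpC_par] using hp.unionRight⟩
  | parR Θ G' ih =>
      obtain ⟨p, hp⟩ := ih
      exact ⟨(interpC (focus Θ l)).n + p,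
        by simpa only [GPat.fill, focus_par, interpC_par] using hp.unionLeft⟩

/-! ### surgery on Hamiltonian orders -/

def Fnat {n : ℕ} (f : Equiv.Perm (Fin n)) (t : ℕ) : ℕ :=
  if ht : t < n then (f ⟨t, ht⟩).val else t

lemma Fnat_eq {n : ℕ} (f : Equiv.Perm (Fin n)) {t : ℕ} (ht : t < n) :
    Fnat f t = (f ⟨t, ht⟩).val := dif_pos ht

def gNat (p b s : ℕ) (F : ℕ → ℕ) (t : ℕ) : ℕ :=
  if t < s then phiIdx p b (F t) else if t < s + b then p + (t - s)
  else phiIdx p b (F (t - b + 1))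

lemma gNat_lo {p b s t : ℕ} {F : ℕ → ℕ} (h : t < s) :
    gNat p b s F t = phiIdx p b (F t) := if_pos h

lemma gNat_blk {p b s t : ℕ} {F : ℕ → ℕ} (h1 : ¬ t < s) (h2 : t < s + b) :
    gNat p b s F t = p + (t - s) := by unfold gNat; rw [if_neg h1, if_pos h2]

lemma gNat_hi {p b s t : ℕ} {F : ℕ → ℕ} (h1 : ¬ t < s) (h2 : ¬ t < s + b) :
    gNat p b s F t = phiIdx p b (F (t - b + 1)) := by
  unfold gNat; rw [if_neg h1, if_neg h2]

lemma surgery {G₁ G₂ : Graph B} {p : ℕ} {b₀ : B} {L : List B}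
    (h : ReplV G₁ G₂ p b₀ L)
    (htr : ∀ i j k, G₁.edge i j → G₁.edge j k → G₁.edge i k)
    (f₁ : Equiv.Perm (Fin G₁.n)) (hham : IsHam G₁ f₁) :
    ∃ f₂ : Equiv.Perm (Fin G₂.n), IsHam G₂ f₂ ∧
      labList G₂ f₂ = (labList G₁ f₁).take ((f₁.symm ⟨p, h.hp⟩).val)
        ++ L ++ (labList G₁ f₁).drop ((f₁.symm ⟨p, h.hp⟩).val + 1) := by
  classical
  have hn : G₂.n + 1 = G₁.n + L.length := h.hn
  have hp : p < G₁.n := h.hp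
  set b := L.length with hbdef
  set s := (f₁.symm ⟨p, h.hp⟩).val with hsdef
  have hs_lt : s < G₁.n := (f₁.symm ⟨p, h.hp⟩).isLt
  set F : ℕ → ℕ := Fnat f₁ with hFdef
  have hF_eq : ∀ t (ht : t < G₁.n), F t = (f₁ ⟨t, ht⟩).val := fun t ht => Fnat_eq f₁ ht
  have hF_lt : ∀ t, t < G₁.n → F t < G₁.n := fun t ht => by
    rw [hF_eq t ht]; exact (f₁ _).isLt
  have hF_s : F s = p := by
    rw [hF_eq s hs_lt]
    have hfin : (⟨s, hs_lt⟩ : Fin G₁.n) = f₁.symm ⟨p, h.hp⟩ := Fin.ext hsdef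
    rw [hfin, Equiv.apply_symm_apply]
  have hF_ne_p : ∀ t, t < G₁.n → t ≠ s → F t ≠ p := by
    intro t ht hts hc
    apply hts
    rw [hF_eq t ht] at hc
    have h2 : f₁ ⟨t, ht⟩ = ⟨p, h.hp⟩ := Fin.ext hc
    have h3 := congrArg f₁.symm h2
    rw [Equiv.symm_apply_apply] at h3
    have := congrArg Fin.val h3
    rw [← hsdef] at this
    exact this
  have hF_inj : ∀ t u, t < G₁.n → u < G₁.n → F t = F u → t = u := by
    intro t u ht hu hc
    rw [hF_eq t ht, hF_eq u hu] at hc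
    exact congrArg Fin.val (f₁.injective (Fin.ext hc))
  have htop₁ : ∀ t u, t < G₁.n → u < G₁.n → G₁.edge (F t) (F u) → t < u := by
    intro t u ht hu he
    rw [hF_eq t ht, hF_eq u hu] at he
    have := (isTopOrder_iff'.mp hham.1) ⟨t, ht⟩ ⟨u, hu⟩ he
    simpa [Fin.lt_def] using this
  have hcons₁ : ∀ t, t + 1 < G₁.n → G₁.edge (F t) (F (t + 1)) := by
    intro t ht
    rw [hF_eq t (by omega), hF_eq (t + 1) ht]
    exact hham.2 t ht
  have hphi_lt : ∀ i, i < G₁.n → i ≠ p → phiIdx p b i < G₂.n :=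
    fun i hi hip => phi_lt hp hn hi hip
  have hphi_out : ∀ i, i ≠ p → (phiIdx p b i < p ∨ p + b ≤ phiIdx p b i) := by
    intro i hip; unfold phiIdx; split <;> omega
  have hphi_inj : ∀ i i', i ≠ p → i' ≠ p → phiIdx p b i = phiIdx p b i' → i = i' := by
    intro i i' h1 h2; unfold phiIdx; split <;> split <;> omega
  set gN : ℕ → ℕ := gNat p b s F with hgNdef
  -- edge translations
  have hedge_oo : ∀ o o', o < G₁.n → o' < G₁.n → o ≠ s → o' ≠ s →
      (G₂.edge (phiIdx p b (F o)) (phiIdx p b (F o')) ↔ G₁.edge (F o) (F o')) :=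
    fun o o' ho ho' hos ho's =>
      h.hee _ _ (hF_lt _ ho) (hF_lt _ ho') (hF_ne_p _ ho hos) (hF_ne_p _ ho' ho's)
  have hedge_ob : ∀ o k, o < G₁.n → o ≠ s → k < b →
      (G₂.edge (phiIdx p b (F o)) (p + k) ↔ G₁.edge (F o) p) :=
    fun o k ho hos hk => h.heb _ _ (hF_lt _ ho) (hF_ne_p _ ho hos) hk
  have hedge_bo : ∀ o k, o < G₁.n → o ≠ s → k < b →
      (G₂.edge (p + k) (phiIdx p b (F o)) ↔ G₁.edge p (F o)) :=
    fun o k ho hos hk => h.hbe _ _ (hF_lt _ ho) (hF_ne_p _ ho hos) hk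
  -- range and injectivity of gN
  have hgN_lt : ∀ t, t < G₂.n → gN t < G₂.n := by
    intro t ht
    by_cases h1 : t < s
    · rw [hgNdef, gNat_lo h1]
      exact hphi_lt _ (hF_lt t (by omega)) (hF_ne_p t (by omega) (by omega))
    · by_cases h2 : t < s + b
      · rw [hgNdef, gNat_blk h1 h2]; omega
      · rw [hgNdef, gNat_hi h1 h2]
        have ho : t - b + 1 < G₁.n := by omega
        exact hphi_lt _ (hF_lt _ ho) (hF_ne_p _ ho (by omega))
  have hgN_inj : ∀ t u, t < G₂.n → u < G₂.n → gN t = gN u → t = u := by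
    intro t u ht hu hc
    by_cases h1 : t < s <;> by_cases h2 : u < s
    · rw [hgNdef, gNat_lo h1, gNat_lo h2] at hc
      exact hF_inj t u (by omega) (by omega)
        (hphi_inj _ _ (hF_ne_p t (by omega) (by omega)) (hF_ne_p u (by omega) (by omega)) hc)
    · by_cases h3 : u < s + b
      · rw [hgNdef, gNat_lo h1, gNat_blk h2 h3] at hc
        have := hphi_out (F t) (hF_ne_p t (by omega) (by omega))
        omega
      · rw [hgNdef, gNat_lo h1, gNat_hi h2 h3] at hc
        have ho : u - b + 1 < G₁.n := by omega
        have := hF_inj t (u - b + 1) (by omega) ho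
          (hphi_inj _ _ (hF_ne_p t (by omega) (by omega)) (hF_ne_p _ ho (by omega)) hc)
        omega
    · by_cases h3 : t < s + b
      · rw [hgNdef, gNat_blk h1 h3, gNat_lo h2] at hc
        have := hphi_out (F u) (hF_ne_p u (by omega) (by omega))
        omega
      · rw [hgNdef, gNat_hi h1 h3, gNat_lo h2] at hc
        have ho : t - b + 1 < G₁.n := by omega
        have := hF_inj (t - b + 1) u ho (by omega)
          (hphi_inj _ _ (hF_ne_p _ ho (by omega)) (hF_ne_p u (by omega) (by omega)) hc)
        omega
    · by_cases h3 : t < s + b <;> by_cases h4 : u < s + b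
      · rw [hgNdef, gNat_blk h1 h3, gNat_blk h2 h4] at hc; omega
      · rw [hgNdef, gNat_blk h1 h3, gNat_hi h2 h4] at hc
        have ho : u - b + 1 < G₁.n := by omega
        have := hphi_out (F (u - b + 1)) (hF_ne_p _ ho (by omega))
        omega
      · rw [hgNdef, gNat_hi h1 h3, gNat_blk h2 h4] at hc
        have ho : t - b + 1 < G₁.n := by omega
        have := hphi_out (F (t - b + 1)) (hF_ne_p _ ho (by omega))
        omega
      · rw [hgNdef, gNat_hi h1 h3, gNat_hi h2 h4] at hc
        have ho : t - b + 1 < G₁.n := by omega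
        have ho' : u - b + 1 < G₁.n := by omega
        have := hF_inj _ _ ho ho'
          (hphi_inj _ _ (hF_ne_p _ ho (by omega)) (hF_ne_p _ ho' (by omega)) hc)
        omega
  -- the permutation
  have he_inj : Function.Injective (fun t : Fin G₂.n => (⟨gN t.val, hgN_lt t.val t.isLt⟩ : Fin G₂.n)) := by
    intro t u hc
    exact Fin.ext (hgN_inj t.val u.val t.isLt u.isLt (congrArg Fin.val hc))
  set f₂ : Equiv.Perm (Fin G₂.n) :=
    Equiv.ofBijective _ (Finite.injective_iff_bijective.mp he_inj) with hf₂def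
  have hf₂ : ∀ t : Fin G₂.n, (f₂ t).val = gN t.val := fun t => rfl
  -- top order
  have htop₂ : G₂.IsTopOrder f₂ := by
    rw [isTopOrder_iff']
    intro t u he
    rw [Fin.lt_def]
    have ht := t.isLt
    have hu := u.isLt
    rw [hf₂ t, hf₂ u] at he
    by_cases h1 : t.val < s <;> by_cases h2 : u.val < s
    · rw [hgNdef, gNat_lo h1, gNat_lo h2] at he
      have := htop₁ _ _ (by omega) (by omega) ((hedge_oo _ _ (by omega) (by omega) (by omega) (by omega)).mp he)
      omega
    · omega
    · -- t.val ≥ s, u.val < s : impossible edge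
      exfalso
      by_cases h3 : t.val < s + b
      · rw [hgNdef, gNat_blk h1 h3, gNat_lo h2] at he
        have hbpos : 0 < b := by omega
        have := (hedge_bo u.val (t.val - s) (by omega) (by omega) (by omega)).mp he
        rw [← hF_s] at this
        have := htop₁ _ _ (by omega) (by omega) this
        omega
      · rw [hgNdef, gNat_hi h1 h3, gNat_lo h2] at he
        have ho : t.val - b + 1 < G₁.n := by omega
        have := htop₁ _ _ ho (by omega)
          ((hedge_oo _ _ ho (by omega) (by omega) (by omega)).mp he)
        omega
    · by_cases h3 : t.val < s + b <;> by_cases h4 : u.val < s + b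
      · rw [hgNdef, gNat_blk h1 h3, gNat_blk h2 h4] at he
        have := (h.hbb (t.val - s) (u.val - s) (by omega) (by omega)).mp he
        omega
      · omega
      · exfalso
        rw [hgNdef, gNat_hi h1 h3, gNat_blk h2 h4] at he
        have ho : t.val - b + 1 < G₁.n := by omega
        have := (hedge_ob (t.val - b + 1) (u.val - s) ho (by omega) (by omega)).mp he
        rw [← hF_s] at this
        have := htop₁ _ _ ho (by omega) this
        omega
      · rw [hgNdef, gNat_hi h1 h3, gNat_hi h2 h4] at he
        have ho : t.val - b + 1 < G₁.n := by omega
        have ho' : u.val - b + 1 < G₁.n := by omega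
        have := htop₁ _ _ ho ho'
          ((hedge_oo _ _ ho ho' (by omega) (by omega)).mp he)
        omega
  -- consecutive edges
  have hcons₂ : ∀ k, k + 1 < G₂.n → G₂.edge (gN k) (gN (k + 1)) := by
    intro k hk
    by_cases c1 : k + 1 < s
    · rw [hgNdef, gNat_lo (by omega : k < s), gNat_lo c1]
      exact (hedge_oo k (k + 1) (by omega) (by omega) (by omega) (by omega)).mpr
        (hcons₁ k (by omega))
    · by_cases c2 : k + 1 = s
      · by_cases cb : 0 < b
        · rw [hgNdef, gNat_lo (by omega : k < s), gNat_blk (by omega) (by omega)]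
          have e0 : k + 1 - s = 0 := by omega
          rw [e0]
          refine (hedge_ob k 0 (by omega) (by omega) (by omega)).mpr ?_
          rw [← hF_s, ← c2]
          exact hcons₁ k (by omega)
        · rw [hgNdef, gNat_lo (by omega : k < s), gNat_hi (by omega) (by omega)]
          have hs1 : s + 1 < G₁.n := by omega
          have e1 : k + 1 - b + 1 = s + 1 := by omega
          rw [e1]
          refine (hedge_oo k (s + 1) (by omega) (by omega) (by omega) (by omega)).mpr ?_
          refine htr _ (F s) _ ?_ (hcons₁ s hs1)
          have := hcons₁ k (by omega)
          rwa [c2] at this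
      · by_cases c3 : k + 1 < s + b
        · rw [hgNdef, gNat_blk (by omega) (by omega), gNat_blk (by omega) c3]
          exact (h.hbb (k - s) (k + 1 - s) (by omega) (by omega)).mpr (by omega)
        · by_cases c4 : k + 1 = s + b
          · have cb : 0 < b := by omega
            rw [hgNdef, gNat_blk (by omega) (by omega), gNat_hi (by omega) (by omega)]
            have hs1 : s + 1 < G₁.n := by omega
            have e1 : k + 1 - b + 1 = s + 1 := by omega
            rw [e1]
            refine (hedge_bo (s + 1) (k - s) hs1 (by omega) (by omega)).mpr ?_
            rw [← hF_s]
            exact hcons₁ s hs1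
          · rw [hgNdef, gNat_hi (by omega) (by omega), gNat_hi (by omega) (by omega)]
            have ho : k - b + 1 + 1 < G₁.n := by omega
            have e1 : k + 1 - b + 1 = (k - b + 1) + 1 := by omega
            rw [e1]
            exact (hedge_oo _ _ (by omega) (by omega) (by omega) (by omega)).mpr
              (hcons₁ (k - b + 1) ho)
  refine ⟨f₂, ⟨htop₂, ?_⟩, ?_⟩
  · intro k hk
    rw [hf₂, hf₂]
    exact hcons₂ k hk
  · -- label list
    have hlen₁ : (labList G₁ f₁).length = G₁.n := by simp [labList]
    have hlen₂ : (labList G₂ f₂).length = G₂.n := by simp [labList]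
    have hTlen : ((labList G₁ f₁).take s).length = s := by
      rw [List.length_take, hlen₁]; omega
    apply List.ext_getElem
    · simp only [List.length_append, hTlen, hlen₂, List.length_drop, hlen₁, ← hbdef]
      omega
    · intro i hi1 hi2
      have hi : i < G₂.n := by omega
      have hL : (labList G₂ f₂)[i] = G₂.label (gN i) := by
        simp only [labList, List.getElem_ofFn]
        rw [hf₂]
      rw [hL]
      by_cases d1 : i < s
      · rw [List.getElem_append_left (by rw [List.length_append, hTlen]; omega),
          List.getElem_append_left (by rw [hTlen]; omega)]
        rw [List.getElem_take]
        rw [hgNdef, gNat_lo d1]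
        have := h.hlab (F i) (hF_lt i (by omega)) (hF_ne_p i (by omega) (by omega))
        rw [this]
        simp only [labList, List.getElem_ofFn]
        rw [hF_eq i (by omega)]
      · by_cases d2 : i < s + b
        · rw [List.getElem_append_left (by rw [List.length_append, hTlen]; omega),
            List.getElem_append_right (by rw [hTlen]; omega)]
          rw [hgNdef, gNat_blk d1 d2]
          have hkb : i - s < b := by omega
          rw [h.hlabL (i - s) hkb, List.get_eq_getElem]
          exact getElem_congr_idx (by rw [hTlen])
        · rw [List.getElem_append_right (by rw [List.length_append, hTlen]; omega)]
          rw [hgNdef, gNat_hi d1 d2]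
          have ho : i - b + 1 < G₁.n := by omega
          rw [h.hlab (F (i - b + 1)) (hF_lt _ ho) (hF_ne_p _ ho (by omega))]
          rw [List.getElem_drop]
          have hidx : s + 1 + (i - (List.take s (labList G₁ f₁) ++ L).length) = i - b + 1 := by
            rw [List.length_append, hTlen]; omega
          rw [getElem_congr_idx hidx]
          simp only [labList, List.getElem_ofFn]
          rw [hF_eq (i - b + 1) ho]

/-! ### heap lemmas -/

lemma Heap.find_update_self (H : Heap α) (l : ℕ) (t : ℕ × α × α) :
    (H.update l t).find l = some t := by simp [Heap.update]

lemma Heap.find_update_ne (H : Heap α) {l l' : ℕ} (h : l' ≠ l) (t : ℕ × α × α) :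
    (H.update l t).find l' = H.find l' := by simp [Heap.update, h]

lemma Heap.dom_update (H : Heap α) (l : ℕ) (t : ℕ × α × α) :
    (H.update l t).dom = insert l H.dom := by
  ext x
  by_cases h : x = l <;> simp [Heap.dom, Heap.update, h]

/-! ### more OPM helpers -/

lemma listProd_append_inv (P : OPM α) {A B : List α} {u : α}
    (h : listProd P (A ++ B) = some u) :
    ∃ a bb, listProd P A = some a ∧ listProd P B = some bb ∧ P.mul a bb = some u := by
  rw [listProd_append] at h
  cases hA : listProd P A with
  | none => rw [hA] at h; simp at h
  | some a =>
      cases hB : listProd P B with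
      | none => rw [hA, hB] at h; simp at h
      | some bb =>
          rw [hA, hB] at h
          simp only [Option.bind_some] at h
          exact ⟨a, bb, rfl, rfl, h⟩

lemma listProd_cons_inv (P : OPM α) {a : α} {B : List α} {u : α}
    (h : listProd P (a :: B) = some u) :
    ∃ bb, listProd P B = some bb ∧ P.mul a bb = some u := by
  rw [listProd_cons] at h
  cases hB : listProd P B with
  | none => rw [hB] at h; simp at h
  | some bb => rw [hB] at h; simp only [Option.bind_some] at h; exact ⟨bb, rfl, h⟩

lemma opm_assoc_inv1 (P : OPM α) {a b c ab x : α} (hab : P.mul a b = some ab)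
    (habc : P.mul ab c = some x) :
    ∃ bc, P.mul b c = some bc ∧ P.mul a bc = some x := by
  have h := P.mul_assoc a b c
  rw [hab] at h
  simp only [Option.bind_some] at h
  rw [habc] at h
  cases hbc : P.mul b c with
  | none => rw [hbc] at h; simp at h
  | some bc =>
      rw [hbc] at h
      simp only [Option.bind_some] at h
      exact ⟨bc, rfl, h.symm⟩

lemma opm_assoc_inv2 (P : OPM α) {a b c bc x : α} (hbc : P.mul b c = some bc)
    (habc : P.mul a bc = some x) :
    ∃ ab, P.mul a b = some ab ∧ P.mul ab c = some x := by
  have h := P.mul_assoc a b c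
  rw [hbc] at h
  simp only [Option.bind_some] at h
  rw [habc] at h
  cases hab : P.mul a b with
  | none => rw [hab] at h; simp at h
  | some ab =>
      rw [hab] at h
      simp only [Option.bind_some] at h
      exact ⟨ab, rfl, h⟩

/-! ### simple traceability facts -/

lemma traceable_of_n_eq_zero {G : Graph B} (h : G.n = 0) : G.Traceable := by
  refine ⟨Equiv.refl _, ?_, ?_⟩
  · intro i j he
    have := G.edge_lt _ _ he
    omega
  · intro g _
    apply Equiv.ext
    intro x
    exact absurd x.isLt (by omega)

lemma traceable_single {G : Graph B} (h1 : G.n = 1) (hpp : ¬ G.edge 0 0) : G.Traceable := by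
  refine ⟨Equiv.refl _, ?_, ?_⟩
  · intro i j he
    have hb := G.edge_lt _ _ he
    have e1 : (i : ℕ) = 0 := by omega
    have e2 : (j : ℕ) = 0 := by omega
    rw [e1, e2] at he
    exact absurd he hpp
  · intro g _
    apply Equiv.ext
    intro x
    apply Fin.ext
    have h2 := (g x).isLt
    have h3 := x.isLt
    simp only [Equiv.refl_apply]
    omega

lemma gUsage_single {G : Graph (Binding α)} (P : OPM α) (h1 : G.n = 1)
    (hpp : ¬ G.edge 0 0) {bl : Binding α} (hlab : G.label 0 = bl) :
    gUsage P G (bUsage P bl) := by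
  refine ⟨Equiv.refl _, ?_, ?_⟩
  · intro i j he
    have hb := G.edge_lt _ _ he
    have e1 : (i : ℕ) = 0 := by omega
    have e2 : (j : ℕ) = 0 := by omega
    rw [e1, e2] at he
    exact absurd he hpp
  · have hlist : (List.ofFn fun k : Fin G.n => bUsage P (G.label ((Equiv.refl _ k)).val))
        = [bUsage P bl] := by
      apply List.ext_getElem
      · simp [h1]
      · intro i hh1 hh2
        simp only [List.getElem_ofFn, Equiv.refl_apply, List.getElem_singleton]
        have : i = 0 := by simp at hh2; omega
        subst this
        rw [hlab]
    rw [hlist, listProd_singleton]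

/-! ### label-list splitting -/

lemma labList_length {G : Graph B} (f : Equiv.Perm (Fin G.n)) :
    (labList G f).length = G.n := by simp [labList]

lemma labList_at_s {G₁ : Graph B} (f₁ : Equiv.Perm (Fin G₁.n)) {p : ℕ} (hp : p < G₁.n) :
    (labList G₁ f₁)[(f₁.symm ⟨p, hp⟩).val]'(by rw [labList_length]; exact (f₁.symm _).isLt)
      = G₁.label p := by
  simp only [labList, List.getElem_ofFn]
  have h2 : (⟨(f₁.symm ⟨p, hp⟩).val, (f₁.symm ⟨p, hp⟩).isLt⟩ : Fin G₁.n)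
      = f₁.symm ⟨p, hp⟩ := Fin.ext rfl
  rw [h2, Equiv.apply_symm_apply]

lemma labList_split {G₁ : Graph B} (f₁ : Equiv.Perm (Fin G₁.n)) {p : ℕ} (hp : p < G₁.n) :
    labList G₁ f₁ = (labList G₁ f₁).take (f₁.symm ⟨p, hp⟩).val
      ++ G₁.label p :: (labList G₁ f₁).drop ((f₁.symm ⟨p, hp⟩).val + 1) := by
  have hsl : (f₁.symm ⟨p, hp⟩).val < (labList G₁ f₁).length := by
    rw [labList_length]; exact (f₁.symm _).isLt
  calc labList G₁ f₁
      = (labList G₁ f₁).take (f₁.symm ⟨p, hp⟩).val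
        ++ (labList G₁ f₁).drop (f₁.symm ⟨p, hp⟩).val :=
        (List.take_append_drop _ _).symm
    _ = _ := by
        rw [← List.getElem_cons_drop hsl]
        rw [labList_at_s f₁ hp]

/-! ### transfer of heap conditions -/

lemma heap_cond_transfer {P : OPM α} {Γ₁ Γ₂ : Ctx α} {l' : ℕ}
    (hg : GEq (interpC (focus Γ₁ l')) (interpC (focus Γ₂ l')))
    {n : ℕ} {m₀ m : α}
    (hc : (interpC (focus Γ₁ l')).n = n + 1 ∧
      ∃ u r, focusUsage P Γ₁ l' u ∧ P.mul m u = some r ∧ P.le r m₀) :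
    (interpC (focus Γ₂ l')).n = n + 1 ∧
      ∃ u r, focusUsage P Γ₂ l' u ∧ P.mul m u = some r ∧ P.le r m₀ := by
  obtain ⟨h1, u, r, hu, h2, h3⟩ := hc
  exact ⟨hg.1.symm.trans h1, u, r, hg.gUsage P hu, h2, h3⟩

lemma hole_n_bind {l l' : ℕ} (hne : l ≠ l') (m : α) :
    (interpC (focus (GCtx.bind (Binding.loc l m) : Ctx α) l')).n = 0 := by
  rw [focus_loc_ne hne]; rfl

lemma hole_n_pair {l l' : ℕ} (hne : l ≠ l') (m₁ m₂ : α) :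
    (interpC (focus (GCtx.comma (GCtx.bind (Binding.loc l m₁))
      (GCtx.bind (Binding.loc l m₂)) : Ctx α) l')).n = 0 := by
  rw [focus_comma, focus_loc_ne hne, focus_loc_ne hne]; rfl

/-! ### base instances of ReplV -/

lemma replV_base_nil (l : ℕ) (m : α) :
    ReplV (interpC (focus (GCtx.bind (Binding.loc l m)) l))
      (interpC (focus (GCtx.empty : Ctx α) l)) 0 (Binding.loc l m) [] := by
  rw [focus_loc_self, interpC_loc, focus_empty, interpC_empty]
  refine ⟨Nat.one_pos, rfl, rfl, ?_, ?_, ?_, ?_, ?_, ?_, ?_⟩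
  · intro i hi; simp at hi
  · intro i hi hip; change i < 1 at hi; omega
  · intro i j hi hj hip hjp; change i < 1 at hi; omega
  · intro i k hi hip hk; change i < 1 at hi; omega
  · intro i k hi hip hk; change i < 1 at hi; omega
  · intro k k' hk hk'; simp at hk
  · exact fun h => h

lemma replV_base_single (l : ℕ) (m' m₂ : α) :
    ReplV (interpC (focus (GCtx.bind (Binding.loc l m')) l))
      (interpC (focus (GCtx.bind (Binding.loc l m₂)) l)) 0 (Binding.loc l m')
      [Binding.loc l m₂] := by
  rw [focus_loc_self, interpC_loc, focus_loc_self, interpC_loc]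
  refine ⟨Nat.one_pos, rfl, rfl, ?_, ?_, ?_, ?_, ?_, ?_, ?_⟩
  · intro i hi
    simp only [List.length_singleton] at hi
    have : i = 0 := by omega
    subst this
    rfl
  · intro i hi hip; change i < 1 at hi; omega
  · intro i j hi hj hip hjp; change i < 1 at hi; omega
  · intro i k hi hip hk; change i < 1 at hi; omega
  · intro i k hi hip hk; change i < 1 at hi; omega
  · intro k k' hk hk'
    simp only [List.length_singleton] at hk hk'
    have : k = 0 := by omega
    have : k' = 0 := by omega
    subst_vars
    exact iff_of_false (fun h => h) (by omega)
  · exact fun h => h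

lemma replV_base_pair (l : ℕ) (m' m₁ m₂ : α) :
    ReplV (interpC (focus (GCtx.bind (Binding.loc l m')) l))
      (interpC (focus (GCtx.comma (GCtx.bind (Binding.loc l m₁))
        (GCtx.bind (Binding.loc l m₂))) l)) 0
      (Binding.loc l m') [Binding.loc l m₁, Binding.loc l m₂] := by
  rw [focus_loc_self, interpC_loc, focus_comma, focus_loc_self, focus_loc_self,
    interpC_comma, interpC_loc, interpC_loc]
  refine ⟨Nat.one_pos, rfl, rfl, ?_, ?_, ?_, ?_, ?_, ?_, ?_⟩
  · intro i hi
    change i < 2 at hi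
    interval_cases i
    · rfl
    · rfl
  · intro i hi hip; change i < 1 at hi; omega
  · intro i j hi hj hip hjp; change i < 1 at hi; omega
  · intro i k hi hip hk; change i < 1 at hi; omega
  · intro i k hi hip hk; change i < 1 at hi; omega
  · intro k k' hk hk'
    change k < 2 at hk
    change k' < 2 at hk'
    interval_cases k <;> interval_cases k' <;>
      simp [Graph.join_edge]
  · intro h
    simp [Graph.join_edge] at h

end Aux

/-- **Heap tracking.** The five ways in which the heap typing judgment
tracks configuration reduction. -/
theorem heap_tracking {α : Type} (P : OPM α) :
    -- (1) allocation of a fresh resource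
    (∀ (G : CtxPat α) (H : Heap α) (l : ℕ) (m : α),
        isRuntime (GPat.fill G GCtx.empty) →
        HeapTy P (GPat.fill G GCtx.empty) H → l ∉ Heap.dom H →
        HeapTy P (GPat.fill G (GCtx.bind (Binding.loc l m)))
          (H.update l (0, m, P.eps))) ∧
    -- (2) splitting a resource
    (∀ (G : CtxPat α) (H : Heap α) (l n : ℕ) (m₀ m m' m₁ m₂ : α),
        isRuntime (GPat.fill G GCtx.empty) →
        HeapTy P (GPat.fill G (GCtx.bind (Binding.loc l m')))
          (H.update l (n, m₀, m)) →
        P.mulLe m₁ m₂ m' →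
        HeapTy P (GPat.fill G (GCtx.comma (GCtx.bind (Binding.loc l m₁))
          (GCtx.bind (Binding.loc l m₂)))) (H.update l (n + 1, m₀, m))) ∧
    -- (3) performing an operation
    (∀ (C : Ctx α) (H : Heap α) (l n : ℕ) (m₀ m m' m₁ m₂ : α),
        isRuntime C →
        HeapTy P (GCtx.comma (GCtx.bind (Binding.loc l m')) C)
          (H.update l (n, m₀, m)) →
        P.mulLe m₁ m₂ m' →
        ∃ r : α, P.mul m m₁ = some r ∧
          HeapTy P (GCtx.comma (GCtx.bind (Binding.loc l m₂)) C)
            (H.update l (n, m₀, r))) ∧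
    -- (4) dropping an aliased resource
    (∀ (G : CtxPat α) (H : Heap α) (l n : ℕ) (m₀ m m' : α),
        isRuntime (GPat.fill G GCtx.empty) →
        HeapTy P (GPat.fill G (GCtx.bind (Binding.loc l m')))
          (H.update l (n + 1, m₀, m)) →
        P.le P.eps m' →
        HeapTy P (GPat.fill G GCtx.empty) (H.update l (n, m₀, m))) ∧
    -- (5) dropping the last reference to a resource
    (∀ (G : CtxPat α) (H : Heap α) (l : ℕ) (m₀ m m' : α),
        isRuntime (GPat.fill G GCtx.empty) →
        HeapTy P (GPat.fill G (GCtx.bind (Binding.loc l m')))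
          (H.update l (0, m₀, m)) →
        l ∉ Heap.dom H →
        HeapTy P (GPat.fill G GCtx.empty) H) := by
  refine ⟨?_, ?_, ?_, ?_, ?_⟩
  -- ================= Part 1: allocation =================
  · intro G H l m hrt hty hldom
    obtain ⟨hOD, hdom, hconds⟩ := hty
    have hlnot : l ∉ ldom (GPat.fill G GCtx.empty) := by rw [hdom]; exact hldom
    have hn0 : (interpC (focus (GPat.fill G GCtx.empty) l)).n = 0 := focus_n_zero hrt hlnot
    obtain ⟨p, hrep⟩ := replV_fill G (replV_base_nil l m)
    have hn1 : (interpC (focus (GPat.fill G (GCtx.bind (Binding.loc l m))) l)).n = 1 := by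
      have h2 := hrep.hn
      simp only [List.length_nil] at h2
      omega
    have hp0 : p = 0 := by have := hrep.hp; omega
    have hpp : ¬ (interpC (focus (GPat.fill G (GCtx.bind (Binding.loc l m))) l)).edge 0 0 := by
      have h2 := hrep.hpp; rwa [hp0] at h2
    have hlabel0 : (interpC (focus (GPat.fill G (GCtx.bind (Binding.loc l m))) l)).label 0
        = Binding.loc l m := by
      have h2 := hrep.hb0; rwa [hp0] at h2
    have hgeq : ∀ l', l' ≠ l → GEq (interpC (focus (GPat.fill G GCtx.empty) l'))
        (interpC (focus (GPat.fill G (GCtx.bind (Binding.loc l m))) l')) := by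
      intro l' hl'
      exact fill_congr G (GEq_of_n_eq_zero rfl (hole_n_bind (fun h => hl' h.symm) m))
    refine ⟨?_, ?_, ?_⟩
    · intro l'
      by_cases hc : l' = l
      · subst hc; exact traceable_single hn1 hpp
      · exact ((hgeq l' hc).traceable) (hOD l')
    · rw [ldom_fill, ldom_bind_loc, hdom, Heap.dom_update, Set.insert_eq, Set.union_comm]
    · intro l' n' m₀' m'' hfind
      by_cases hc : l' = l
      · subst hc
        rw [Heap.find_update_self] at hfind
        simp only [Option.some.injEq, Prod.mk.injEq] at hfind
        obtain ⟨h4, h5, h6⟩ := hfind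
        subst h4; subst h5; subst h6
        exact ⟨hn1, m, m, gUsage_single P hn1 hpp hlabel0, P.eps_mul m, P.le_refl m⟩
      · rw [Heap.find_update_ne H hc] at hfind
        exact heap_cond_transfer (hgeq l' hc) (hconds l' n' m₀' m'' hfind)
  -- ================= Part 2: splitting =================
  · intro G H l n m₀ m m' m₁ m₂ hrt hty hmul
    obtain ⟨hOD, hdom, hconds⟩ := hty
    obtain ⟨rr, hrr, hrrle⟩ := hmul
    obtain ⟨p, hrep⟩ := replV_fill G (replV_base_pair l m' m₁ m₂)
    have htr := interp_edge_trans (focus (GPat.fill G (GCtx.bind (Binding.loc l m'))) l)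
    obtain ⟨f₁, hham⟩ := traceable_ham (hOD l)
    obtain ⟨f₂, hham₂, hlabeq⟩ := surgery hrep htr f₁ hham
    obtain ⟨hn1, u, r, hu, hmu, hrle⟩ := hconds l n m₀ m (Heap.find_update_self H l _)
    obtain ⟨f, hftop, hfprod⟩ := hu
    rw [ham_unique hham hftop, uList_eq] at hfprod
    have hsplit := labList_split f₁ hrep.hp
    rw [hrep.hb0] at hsplit
    rw [hsplit, List.map_append, List.map_cons] at hfprod
    have hbu : bUsage P (Binding.loc l m') = m' := rfl
    rw [hbu] at hfprod
    obtain ⟨a, w', hA, hCons, hmulaw⟩ := listProd_append_inv P hfprod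
    obtain ⟨w, hW, hm'w⟩ := listProd_cons_inv P hCons
    obtain ⟨w₂, hrrw, hw₂le⟩ := P.mul_mono rr m' w w w' hrrle (P.le_refl w) hm'w
    obtain ⟨u₂, hau₂, hu₂le⟩ := P.mul_mono a a w₂ w' u (P.le_refl a) hw₂le hmulaw
    obtain ⟨r₂, hmr₂, hr₂le⟩ := P.mul_mono m m u₂ u r (P.le_refl m) hu₂le hmu
    have hpairprod : listProd P (List.map (bUsage P)
        [Binding.loc l m₁, Binding.loc l m₂]) = some rr := by
      have h2 : List.map (bUsage P) [Binding.loc l m₁, Binding.loc l m₂] = [m₁, m₂] := rfl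
      rw [h2, listProd_pair]
      exact hrr
    have hgU₂ : gUsage P (interpC (focus (GPat.fill G (GCtx.comma
        (GCtx.bind (Binding.loc l m₁)) (GCtx.bind (Binding.loc l m₂)))) l)) u₂ := by
      refine ⟨f₂, hham₂.1, ?_⟩
      rw [uList_eq, hlabeq, List.append_assoc, List.map_append, listProd_append, hA]
      have hmid : listProd P (List.map (bUsage P)
          ([Binding.loc l m₁, Binding.loc l m₂]
            ++ (labList (interpC (focus (GPat.fill G (GCtx.bind (Binding.loc l m'))) l)) f₁).drop
              ((f₁.symm ⟨p, hrep.hp⟩).val + 1))) = some w₂ := by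
        rw [List.map_append, listProd_append, hpairprod, hW]
        simp only [Option.bind_some]
        exact hrrw
      rw [hmid]
      simp only [Option.bind_some]
      exact hau₂
    have hgeq : ∀ l', l' ≠ l →
        GEq (interpC (focus (GPat.fill G (GCtx.bind (Binding.loc l m'))) l'))
          (interpC (focus (GPat.fill G (GCtx.comma (GCtx.bind (Binding.loc l m₁))
            (GCtx.bind (Binding.loc l m₂)))) l')) := by
      intro l' hl'
      exact fill_congr G (GEq_of_n_eq_zero (hole_n_bind (fun h => hl' h.symm) m')
        (hole_n_pair (fun h => hl' h.symm) m₁ m₂))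
    refine ⟨?_, ?_, ?_⟩
    · intro l''
      by_cases hc : l'' = l
      · subst hc; exact ham_traceable hham₂
      · exact ((hgeq l'' hc).traceable) (hOD l'')
    · rw [ldom_fill, ldom_pair, ← ldom_bind_loc l m', ← ldom_fill, hdom,
        Heap.dom_update, Heap.dom_update]
    · intro l'' n' m₀' m'' hfind
      by_cases hc : l'' = l
      · subst hc
        rw [Heap.find_update_self] at hfind
        simp only [Option.some.injEq, Prod.mk.injEq] at hfind
        obtain ⟨h4, h5, h6⟩ := hfind
        subst h4; subst h5; subst h6
        refine ⟨?_, u₂, r₂, hgU₂, hmr₂, P.le_trans _ _ _ hr₂le hrle⟩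
        have h7 := hrep.hn
        simp only [List.length_cons, List.length_nil] at h7
        omega
      · rw [Heap.find_update_ne H hc] at hfind
        exact heap_cond_transfer (hgeq l'' hc)
          (hconds l'' n' m₀' m'' (by rw [Heap.find_update_ne H hc]; exact hfind))
  -- ================= Part 3: operation =================
  · intro C H l n m₀ m m' m₁ m₂ hrt hty hmul
    obtain ⟨hOD, hdom, hconds⟩ := hty
    obtain ⟨rr, hrr, hrrle⟩ := hmul
    have hrep : ReplV (interpC (focus (GCtx.comma (GCtx.bind (Binding.loc l m')) C) l))
        (interpC (focus (GCtx.comma (GCtx.bind (Binding.loc l m₂)) C) l)) 0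
        (Binding.loc l m') [Binding.loc l m₂] := by
      have h2 := (replV_base_single l m' m₂).joinRight (D := interpC (focus C l))
      simpa only [focus_comma, interpC_comma] using h2
    have htr := interp_edge_trans (focus (GCtx.comma (GCtx.bind (Binding.loc l m')) C) l)
    obtain ⟨f₁, hham⟩ := traceable_ham (hOD l)
    obtain ⟨f₂, hham₂, hlabeq⟩ := surgery hrep htr f₁ hham
    obtain ⟨hn1, u, r, hu, hmu, hrle⟩ := hconds l n m₀ m (Heap.find_update_self H l _)
    obtain ⟨f, hftop, hfprod⟩ := hu
    rw [ham_unique hham hftop, uList_eq] at hfprod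
    -- the hole vertex comes first
    have hX1 : (interpC (focus (GCtx.bind (Binding.loc l m')) l)).n = 1 := by
      rw [focus_loc_self, interpC_loc]
    have hedge0 : ∀ j, 0 < j →
        j < (interpC (focus (GCtx.comma (GCtx.bind (Binding.loc l m')) C) l)).n →
        (interpC (focus (GCtx.comma (GCtx.bind (Binding.loc l m')) C) l)).edge 0 j := by
      intro j hj1 hj2
      rw [focus_comma, interpC_comma] at hj2 ⊢
      rw [Graph.join_n] at hj2
      exact join_edge_cross (by omega) (by omega) (by omega)
    have hs0 : (f₁.symm ⟨0, hrep.hp⟩).val = 0 := by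
      by_contra hs
      have hne0 : f₁ ⟨0, hrep.hp⟩ ≠ ⟨0, hrep.hp⟩ := by
        intro hcst
        apply hs
        have h7 := congrArg f₁.symm hcst
        rw [Equiv.symm_apply_apply] at h7
        exact congrArg Fin.val h7.symm
      have hval0 : 0 < (f₁ ⟨0, hrep.hp⟩).val := by
        rcases Nat.eq_zero_or_pos (f₁ ⟨0, hrep.hp⟩).val with h9 | h9
        · exact absurd (Fin.ext h9 : f₁ ⟨0, hrep.hp⟩ = ⟨0, hrep.hp⟩) hne0
        · exact h9
      have hedge := hedge0 (f₁ ⟨0, hrep.hp⟩).val hval0 (f₁ ⟨0, hrep.hp⟩).isLt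
      have h8 := (isTopOrder_iff'.mp hham.1) (f₁.symm ⟨0, hrep.hp⟩) ⟨0, hrep.hp⟩
        (by rw [Equiv.apply_symm_apply]; exact hedge)
      rw [Fin.lt_def] at h8
      simp only at h8
      omega
    have hsplit := labList_split f₁ hrep.hp
    rw [hrep.hb0, hs0] at hsplit
    rw [hs0] at hlabeq
    simp only [List.take_zero, List.nil_append, Nat.zero_add, List.singleton_append] at hsplit hlabeq
    rw [hsplit, List.map_cons] at hfprod
    have hbu : bUsage P (Binding.loc l m') = m' := rfl
    rw [hbu] at hfprod
    obtain ⟨w, hW, hm'w⟩ := listProd_cons_inv P hfprod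
    obtain ⟨u', hrrw, hu'le⟩ := P.mul_mono rr m' w w u hrrle (P.le_refl w) hm'w
    obtain ⟨v, hmv, hvle⟩ := P.mul_mono m m u' u r (P.le_refl m) hu'le hmu
    obtain ⟨u₂, hm₂w, hm₁u₂⟩ := opm_assoc_inv1 P hrr hrrw
    obtain ⟨r', hmm₁, hr'u₂⟩ := opm_assoc_inv2 P hm₁u₂ hmv
    have hfoc : ∀ l'', l'' ≠ l →
        focus (GCtx.comma (GCtx.bind (Binding.loc l m₂)) C) l''
          = focus (GCtx.comma (GCtx.bind (Binding.loc l m')) C) l'' := by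
      intro l'' hc
      rw [focus_comma, focus_comma, focus_loc_ne (fun h => hc h.symm),
        focus_loc_ne (fun h => hc h.symm)]
    have hgeq : ∀ l'', l'' ≠ l →
        GEq (interpC (focus (GCtx.comma (GCtx.bind (Binding.loc l m')) C) l''))
          (interpC (focus (GCtx.comma (GCtx.bind (Binding.loc l m₂)) C) l'')) := by
      intro l'' hc
      rw [hfoc l'' hc]
      exact GEq.refl _
    have hgU₂ : gUsage P (interpC (focus (GCtx.comma (GCtx.bind (Binding.loc l m₂)) C) l)) u₂ := by
      refine ⟨f₂, hham₂.1, ?_⟩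
      rw [uList_eq, hlabeq, List.map_cons]
      have hbu₂ : bUsage P (Binding.loc l m₂) = m₂ := rfl
      rw [hbu₂, listProd_cons, hW]
      simp only [Option.bind_some]
      exact hm₂w
    refine ⟨r', hmm₁, ?_, ?_, ?_⟩
    · intro l''
      by_cases hc : l'' = l
      · subst hc; exact ham_traceable hham₂
      · exact ((hgeq l'' hc).traceable) (hOD l'')
    · rw [ldom_comma, ldom_bind_loc, ← ldom_bind_loc l m', ← ldom_comma, hdom,
        Heap.dom_update, Heap.dom_update]
    · intro l'' n' m₀' m'' hfind
      by_cases hc : l'' = l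
      · subst hc
        rw [Heap.find_update_self] at hfind
        simp only [Option.some.injEq, Prod.mk.injEq] at hfind
        obtain ⟨h4, h5, h6⟩ := hfind
        subst h4; subst h5; subst h6
        refine ⟨?_, u₂, v, hgU₂, hr'u₂, P.le_trans _ _ _ hvle hrle⟩
        have h7 := hrep.hn
        simp only [List.length_singleton] at h7
        omega
      · rw [Heap.find_update_ne H hc] at hfind
        exact heap_cond_transfer (hgeq l'' hc)
          (hconds l'' n' m₀' m'' (by rw [Heap.find_update_ne H hc]; exact hfind))
  -- ================= Part 4: dropping an alias =================
  · intro G H l n m₀ m m' hrt hty hle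
    obtain ⟨hOD, hdom, hconds⟩ := hty
    obtain ⟨p, hrep⟩ := replV_fill G (replV_base_nil l m')
    have htr := interp_edge_trans (focus (GPat.fill G (GCtx.bind (Binding.loc l m'))) l)
    obtain ⟨f₁, hham⟩ := traceable_ham (hOD l)
    obtain ⟨f₂, hham₂, hlabeq⟩ := surgery hrep htr f₁ hham
    obtain ⟨hn1, u, r, hu, hmu, hrle⟩ := hconds l (n + 1) m₀ m (Heap.find_update_self H l _)
    obtain ⟨f, hftop, hfprod⟩ := hu
    rw [ham_unique hham hftop, uList_eq] at hfprod
    have hsplit := labList_split f₁ hrep.hp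
    rw [hrep.hb0] at hsplit
    rw [hsplit, List.map_append, List.map_cons] at hfprod
    have hbu : bUsage P (Binding.loc l m') = m' := rfl
    rw [hbu] at hfprod
    obtain ⟨a, w', hA, hCons, hmulaw⟩ := listProd_append_inv P hfprod
    obtain ⟨w, hW, hm'w⟩ := listProd_cons_inv P hCons
    obtain ⟨w₂, hepsw, hw₂le⟩ := P.mul_mono P.eps m' w w w' hle (P.le_refl w) hm'w
    have hw2 : w₂ = w := by
      rw [P.eps_mul] at hepsw
      exact (Option.some.inj hepsw).symm
    rw [hw2] at hw₂le
    obtain ⟨u₂, hau₂, hu₂le⟩ := P.mul_mono a a w w' u (P.le_refl a) hw₂le hmulaw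
    obtain ⟨r₂, hmr₂, hr₂le⟩ := P.mul_mono m m u₂ u r (P.le_refl m) hu₂le hmu
    have hgU₂ : gUsage P (interpC (focus (GPat.fill G GCtx.empty) l)) u₂ := by
      refine ⟨f₂, hham₂.1, ?_⟩
      rw [uList_eq, hlabeq]
      simp only [List.append_nil]
      rw [List.map_append, listProd_append, hA, hW]
      simp only [Option.bind_some]
      exact hau₂
    have hFEn : (interpC (focus (GPat.fill G GCtx.empty) l)).n = n + 1 := by
      have h7 := hrep.hn
      simp only [List.length_nil] at h7
      omega
    have hlin : l ∈ ldom (GPat.fill G GCtx.empty) := by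
      by_contra hlnot
      have := focus_n_zero hrt hlnot
      omega
    have hgeq : ∀ l'', l'' ≠ l →
        GEq (interpC (focus (GPat.fill G (GCtx.bind (Binding.loc l m'))) l''))
          (interpC (focus (GPat.fill G GCtx.empty) l'')) := by
      intro l'' hc
      exact fill_congr G (GEq_of_n_eq_zero (hole_n_bind (fun h => hc h.symm) m') rfl)
    refine ⟨?_, ?_, ?_⟩
    · intro l''
      by_cases hc : l'' = l
      · subst hc; exact ham_traceable hham₂
      · exact ((hgeq l'' hc).traceable) (hOD l'')
    · have h2 : ldom (GPat.fill G GCtx.empty) ∪ {l} = ldom (GPat.fill G GCtx.empty) :=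
        Set.union_eq_self_of_subset_right (Set.singleton_subset_iff.mpr hlin)
      calc ldom (GPat.fill G GCtx.empty)
          = ldom (GPat.fill G GCtx.empty) ∪ {l} := h2.symm
        _ = ldom (GPat.fill G (GCtx.bind (Binding.loc l m'))) := by
            rw [ldom_fill G (GCtx.bind (Binding.loc l m')), ldom_bind_loc]
        _ = Heap.dom (H.update l (n + 1, m₀, m)) := hdom
        _ = insert l H.dom := Heap.dom_update H l _
        _ = Heap.dom (H.update l (n, m₀, m)) := (Heap.dom_update H l _).symm
    · intro l'' n' m₀' m'' hfind
      by_cases hc : l'' = l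
      · subst hc
        rw [Heap.find_update_self] at hfind
        simp only [Option.some.injEq, Prod.mk.injEq] at hfind
        obtain ⟨h4, h5, h6⟩ := hfind
        subst h4; subst h5; subst h6
        exact ⟨hFEn, u₂, r₂, hgU₂, hmr₂, P.le_trans _ _ _ hr₂le hrle⟩
      · rw [Heap.find_update_ne H hc] at hfind
        exact heap_cond_transfer (hgeq l'' hc)
          (hconds l'' n' m₀' m'' (by rw [Heap.find_update_ne H hc]; exact hfind))
  -- ================= Part 5: dropping the last reference =================
  · intro G H l m₀ m m' hrt hty hldom
    obtain ⟨hOD, hdom, hconds⟩ := hty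
    obtain ⟨p, hrep⟩ := replV_fill G (replV_base_nil l m')
    obtain ⟨hn1, -⟩ := hconds l 0 m₀ m (Heap.find_update_self H l _)
    have hFE0 : (interpC (focus (GPat.fill G GCtx.empty) l)).n = 0 := by
      have h7 := hrep.hn
      simp only [List.length_nil] at h7
      omega
    have hlnotFE : l ∉ ldom (GPat.fill G GCtx.empty) := by
      intro hin
      have := focus_n_pos hin
      omega
    have h3 : ldom (GPat.fill G GCtx.empty) ∪ {l} = insert l H.dom := by
      rw [← ldom_bind_loc l m', ← ldom_fill, hdom, Heap.dom_update]
    have hgeq : ∀ l'', l'' ≠ l →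
        GEq (interpC (focus (GPat.fill G (GCtx.bind (Binding.loc l m'))) l''))
          (interpC (focus (GPat.fill G GCtx.empty) l'')) := by
      intro l'' hc
      exact fill_congr G (GEq_of_n_eq_zero (hole_n_bind (fun h => hc h.symm) m') rfl)
    refine ⟨?_, ?_, ?_⟩
    · intro l''
      by_cases hc : l'' = l
      · subst hc; exact traceable_of_n_eq_zero hFE0
      · exact ((hgeq l'' hc).traceable) (hOD l'')
    · ext x
      constructor
      · intro hx
        have hx' : x ∈ ldom (GPat.fill G GCtx.empty) ∪ {l} := Or.inl hx
        rw [h3] at hx'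
        rcases Set.mem_insert_iff.mp hx' with h5 | h5
        · subst h5; exact absurd hx hlnotFE
        · exact h5
      · intro hx
        have hx' : x ∈ insert l H.dom := Set.mem_insert_iff.mpr (Or.inr hx)
        rw [← h3] at hx'
        rcases hx' with h5 | h5
        · exact h5
        · exfalso
          have h6 : x = l := h5
          subst h6
          exact hldom hx
    · intro l'' n' m₀' m'' hfind
      have hin : l'' ∈ H.dom := by simp [Heap.dom, hfind]
      have hc : l'' ≠ l := by rintro rfl; exact hldom hin
      exact heap_cond_transfer (hgeq l'' hc)
        (hconds l'' n' m₀' m'' (by rw [Heap.find_update_ne H hc]; exact hfind))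

end LawOrder
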